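/- arXiv:0811.4087 — 5 statements merged into one kernel-verified Lean document; each statement's English description precedes it below -/
import Mathlib

section
/- For every n ≥ 1, every associative (unital) ring A, and every family of elements x_1, …, x_n ∈ A, the left-iterated Lie bracket satisfies […[[x_1, x_2], x_3], …, x_n] = Σ_{i=0}^{n−1} (−1)^i Σ_{σ ∈ S_n, Desc(σ) = {1,…,i}} x_{σ(1)} x_{σ(2)} ⋯ x_{σ(n)}, where [x,y] := xy − yx. Equivalently, the Dynkin element 𝒟_n := Σ_{i=0}^{n−1} (−1)^i D_{={1,…,i}}^{(n)} realizes the iterated bracketing: x_1⋯x_n · 𝒟_n = […[x_1, x_2], …, x_n], where the symmetric group acts on the right by x_1⋯x_n · σ := x_{σ(1)}⋯x_{σ(n)}. -/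
open Classical in
/-- The descent set of a permutation `σ ∈ S_n` (1-based convention):
`Desc(σ) = {i ∈ {1,…,n−1} : σ(i) > σ(i+1)}`, where, 0-based, the 1-based value
`σ(i)` is `σ ⟨i-1⟩`. -/
noncomputable def descSet {n : ℕ} (σ : Equiv.Perm (Fin n)) : Finset ℕ :=
  (Finset.Ioo 0 n).filter
    (fun i => ∃ h : i < n, σ ⟨i, h⟩ < σ ⟨i - 1, lt_of_le_of_lt (Nat.sub_le i 1) h⟩)

/-- The left-iterated Lie bracket `[...[[x₁,x₂],x₃],…,xₙ]` of a list of elements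
of an associative ring, with `[x,y] = xy - yx`. -/
def iterBracket {A : Type*} [Ring A] : List A → A
  | [] => 0
  | [a] => a
  | a :: b :: l => iterBracket ((a * b - b * a) :: l)

def dyn {A : Type*} [Ring A] (a : A) : List A → A
  | [] => a
  | b :: l => dyn (a * b) l - dyn (b * a) l

lemma dyn_sub {A : Type*} [Ring A] (a b : A) (l : List A) :
    dyn (a - b) l = dyn a l - dyn b l := by
  induction l generalizing a b with
  | nil => simp [dyn]
  | cons c l ih =>
    simp only [dyn, sub_mul, mul_sub, ih]
    abel

lemma iterBracket_cons {A : Type*} [Ring A] (a : A) (l : List A) :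
    iterBracket (a :: l) = dyn a l := by
  induction l generalizing a with
  | nil => simp [iterBracket, dyn]
  | cons b l ih => rw [iterBracket, ih, dyn_sub, dyn]

def splits {α : Type*} : List α → List (List α × List α)
  | [] => [([], [])]
  | b :: l => (splits l).map (fun p => (b :: p.1, p.2))
      ++ (splits l).map (fun p => (p.1, b :: p.2))

lemma splits_perm {α : Type*} {l : List α} {p : List α × List α} (hp : p ∈ splits l) :
    (p.1 ++ p.2).Perm l := by
  induction l generalizing p with
  | nil => simp [splits] at hp; simp [hp]
  | cons b l ih =>
    simp only [splits, List.mem_append, List.mem_map] at hp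
    rcases hp with ⟨q, hq, rfl⟩ | ⟨q, hq, rfl⟩
    · exact (List.Perm.cons b (ih hq))
    · exact List.perm_middle.trans ((ih hq).cons b)

lemma splits_nodup {α : Type*} {l : List α} (hl : l.Nodup) : (splits l).Nodup := by
  induction l with
  | nil => simp [splits]
  | cons b l ih =>
    simp only [List.nodup_cons] at hl
    refine List.Nodup.append ?_ ?_ ?_
    · exact (ih hl.2).map (fun p q h => by simpa [Prod.ext_iff] using h)
    · exact (ih hl.2).map (fun p q h => by simpa [Prod.ext_iff] using h)
    · intro p hp hq
      simp only [List.mem_map] at hp hq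
      obtain ⟨q, hq1, rfl⟩ := hp
      obtain ⟨r, hr1, hr2⟩ := hq
      rw [Prod.ext_iff] at hr2
      have hb : b ∈ r.1 := by rw [hr2.1]; exact List.mem_cons_self
      exact hl.1 ((splits_perm hr1).subset (List.mem_append.mpr (Or.inl hb)))

private lemma sum_map_neg {A : Type*} [Ring A] {α : Type*} (L : List α) (g : α → A) :
    (L.map (fun p => -(g p))).sum = -((L.map g).sum) := by
  induction L with
  | nil => simp
  | cons c L ih => simp [ih, neg_add]; abel

lemma dyn_splits {A : Type*} [Ring A] {ι : Type*} (x : ι → A) (l : List ι) (a : A) :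
    dyn a (l.map x) =
      ((splits l).map (fun p => (-1 : A) ^ p.1.length *
        (((p.1.reverse.map x).prod * a) * (p.2.map x).prod))).sum := by
  induction l generalizing a with
  | nil => simp [splits, dyn]
  | cons b l ih =>
    simp only [List.map_cons, dyn, ih, splits, List.map_append, List.map_map, List.sum_append]
    have h1 : (splits l).map ((fun p : List ι × List ι => (-1 : A) ^ p.1.length *
          (((p.1.reverse.map x).prod * a) * (p.2.map x).prod)) ∘ (fun p => (b :: p.1, p.2)))
        = (splits l).map (fun p => -((-1 : A) ^ p.1.length *
          (((p.1.reverse.map x).prod * (x b * a)) * (p.2.map x).prod))) := by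
      refine List.map_congr_left (fun p _ => ?_)
      simp [pow_succ, List.prod_append, mul_assoc]
    have h2 : (splits l).map ((fun p : List ι × List ι => (-1 : A) ^ p.1.length *
          (((p.1.reverse.map x).prod * a) * (p.2.map x).prod)) ∘ (fun p => (p.1, b :: p.2)))
        = (splits l).map (fun p => (-1 : A) ^ p.1.length *
          (((p.1.reverse.map x).prod * (a * x b)) * (p.2.map x).prod)) := by
      refine List.map_congr_left (fun p _ => ?_)
      simp [mul_assoc]
    rw [h1, h2, sum_map_neg]
    abel

section PermOf
variable {m : ℕ}

noncomputable def permOf (L : List (Fin (m+1))) (hL : L.length = m+1) (hnd : L.Nodup) :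
    Equiv.Perm (Fin (m+1)) :=
  Equiv.ofBijective (fun j => L[(j : ℕ)]'(by rw [hL]; exact j.isLt))
    (by
      rw [← Finite.injective_iff_bijective]
      intro a b hab
      have h1 : (a : ℕ) < L.length := by rw [hL]; exact a.isLt
      have h2 : (b : ℕ) < L.length := by rw [hL]; exact b.isLt
      have hinj := List.nodup_iff_injective_getElem.mp hnd
      have : (⟨(a : ℕ), h1⟩ : Fin L.length) = ⟨(b : ℕ), h2⟩ := hinj hab
      have h3 : (a : ℕ) = (b : ℕ) := by simpa using this
      exact Fin.ext h3)

lemma permOf_apply (L : List (Fin (m+1))) (hL : L.length = m+1) (hnd : L.Nodup) (j : Fin (m+1)) :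
    permOf L hL hnd j = L[(j : ℕ)]'(by rw [hL]; exact j.isLt) := rfl

lemma ofFn_permOf (L : List (Fin (m+1))) (hL : L.length = m+1) (hnd : L.Nodup) :
    List.ofFn (permOf L hL hnd) = L := by
  refine List.ext_getElem (by simp [hL]) (fun i h1 h2 => ?_)
  simp only [List.getElem_ofFn]
  rfl

lemma mem_descSet_iff (σ : Equiv.Perm (Fin (m+1))) {i : ℕ} (h0 : 0 < i) (h : i < m+1) :
    i ∈ descSet σ ↔
      σ ⟨i, h⟩ < σ ⟨i - 1, lt_of_le_of_lt (Nat.sub_le i 1) h⟩ := by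
  simp only [descSet, Finset.mem_filter, Finset.mem_Ioo]
  exact ⟨fun ⟨_, _, p⟩ => p, fun p => ⟨⟨h0, h⟩, h, p⟩⟩

lemma descSet_eq_Icc_iff (σ : Equiv.Perm (Fin (m+1))) (k : ℕ) (hk : k < m+1) :
    descSet σ = Finset.Icc 1 k ↔
      ∀ (i : ℕ) (h0 : 0 < i) (h : i < m+1),
        (σ ⟨i, h⟩ < σ ⟨i - 1, lt_of_le_of_lt (Nat.sub_le i 1) h⟩ ↔ i ≤ k) := by
  constructor
  · intro H i h0 h
    rw [← mem_descSet_iff σ h0 h, H, Finset.mem_Icc]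
    omega
  · intro H
    ext i
    rw [Finset.mem_Icc]
    by_cases hi : 0 < i ∧ i < m+1
    · rw [mem_descSet_iff σ hi.1 hi.2, H i hi.1 hi.2]; omega
    · simp only [descSet, Finset.mem_filter, Finset.mem_Ioo]
      constructor
      · rintro ⟨⟨a, b⟩, -⟩; exact absurd ⟨a, b⟩ hi
      · rintro ⟨a, b⟩
        exfalso
        rcases not_and_or.mp hi with h' | h'
        · omega
        · have : i < m + 1 := by
            have := Finset.mem_Icc.mpr (⟨a, b⟩ : 1 ≤ i ∧ i ≤ k)
            omega
          exact h' this
  done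

lemma card_descSet_le (σ : Equiv.Perm (Fin (m+1))) : (descSet σ).card ≤ m := by
  have h1 : descSet σ ⊆ Finset.Ioo 0 (m+1) := Finset.filter_subset _ _
  have := Finset.card_le_card h1
  rw [Nat.card_Ioo] at this
  omega

end PermOf

lemma pairwise_of_adjacent {α : Type*} (R : α → α → Prop)
    (tr : ∀ {a b c}, R a b → R b c → R a c) (l : List α)
    (h : ∀ (i : ℕ) (hi : i + 1 < l.length), R (l[i]'(by omega)) (l[i+1]'hi)) :
    l.Pairwise R := by
  rw [List.pairwise_iff_getElem]
  have key : ∀ (d i : ℕ) (hj : i + d + 1 < l.length), R (l[i]'(by omega)) (l[i+d+1]'hj) := by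
    intro d
    induction d with
    | zero => intro i hj; exact h i hj
    | succ d ih =>
      intro i hj
      exact tr (ih i (by omega)) (by have := h (i+d+1) (by omega); convert this using 2 <;> omega)
  intro i j hi hj hij
  obtain ⟨d, rfl⟩ : ∃ d, j = i + d + 1 := ⟨j - i - 1, by omega⟩
  exact key d i hj

section Valley
variable {m : ℕ}

/-- Lemma A: descent set of the permutation built from a valley word. -/
lemma descSet_permOf (u v : List (Fin (m+1)))
    (hu : u.Pairwise (· < ·)) (hv : v.Pairwise (· < ·))
    (hu0 : ∀ a ∈ u, a ≠ 0) (hv0 : ∀ a ∈ v, a ≠ 0)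
    (hL : (u.reverse ++ 0 :: v).length = m+1) (hnd : (u.reverse ++ 0 :: v).Nodup) :
    descSet (permOf _ hL hnd) = Finset.Icc 1 u.length := by
  set L := u.reverse ++ 0 :: v with hLdef
  set k := u.length with hk
  have hlen : L.length = m + 1 := hL
  have hkm : k < m + 1 := by
    have : u.length + (v.length + 1) = m + 1 := by simpa [hLdef] using hL
    omega
  have htake : L.take (k+1) = u.reverse ++ [0] := by
    have h1 : k + 1 = u.reverse.length + 1 := by simp [hk]
    rw [hLdef, h1, List.take_append]
    simp
  have hdrop : L.drop k = 0 :: v := by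
    have h1 : k = u.reverse.length + 0 := by simp [hk]
    rw [hLdef, h1, List.drop_append]
    simp
  have hp1 : (L.take (k+1)).Pairwise (fun a b => b < a) := by
    rw [htake, List.pairwise_append]
    refine ⟨List.pairwise_reverse.mpr ?_, by simp, ?_⟩
    · exact hu
    · intro a ha b hb
      simp only [List.mem_singleton] at hb
      subst hb
      exact Fin.pos_of_ne_zero (hu0 a (List.mem_reverse.mp ha))
  have hp2 : (L.drop k).Pairwise (· < ·) := by
    rw [hdrop, List.pairwise_cons]
    exact ⟨fun b hb => Fin.pos_of_ne_zero (hv0 b hb), hv⟩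
  rw [descSet_eq_Icc_iff _ _ hkm]
  intro i h0 h
  have hiL : i < L.length := by omega
  have hi1L : i - 1 < L.length := by omega
  have happly : ∀ (j : ℕ) (hj : j < m + 1),
      permOf L hL hnd ⟨j, hj⟩ = L[j]'(by omega) := fun j hj => rfl
  rw [happly i h, happly (i-1) (by omega)]
  have hp1' := List.pairwise_iff_getElem.mp hp1
  have hp2' := List.pairwise_iff_getElem.mp hp2
  have hlent : (L.take (k+1)).length = k+1 := by
    rw [List.length_take]; omega
  have hlend : (L.drop k).length = m + 1 - k := by
    rw [List.length_drop]; omega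
  constructor
  · -- descent implies i ≤ k
    intro hlt
    by_contra hik
    push_neg at hik
    -- i > k : ascent from hp2
    have h1 : i - 1 - k < (L.drop k).length := by omega
    have h2 : i - k < (L.drop k).length := by omega
    have := hp2' (i-1-k) (i-k) h1 h2 (by omega)
    rw [List.getElem_drop, List.getElem_drop] at this
    have e1 : k + (i - 1 - k) = i - 1 := by omega
    have e2 : k + (i - k) = i := by omega
    rw [show L[k + (i-1-k)]'(by omega) = L[i-1]'hi1L from by congr 1,
        show L[k + (i-k)]'(by omega) = L[i]'hiL from by congr 1] at this
    exact absurd hlt (not_lt.mpr this.le)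
  · -- i ≤ k implies descent
    intro hik
    have h1 : i - 1 < (L.take (k+1)).length := by omega
    have h2 : i < (L.take (k+1)).length := by omega
    have := hp1' (i-1) i h1 h2 (by omega)
    rwa [List.getElem_take, List.getElem_take] at this

end Valley

section Valley2
variable {m : ℕ}

lemma valley_take_pairwise (σ : Equiv.Perm (Fin (m+1))) (k : ℕ) (hk : k < m+1)
    (hd : descSet σ = Finset.Icc 1 k) :
    ((List.ofFn σ).take (k+1)).Pairwise (fun a b => b < a) := by
  have hchar := (descSet_eq_Icc_iff σ k hk).mp hd
  have hlen : (List.ofFn σ).length = m + 1 := by simp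
  refine pairwise_of_adjacent (fun (a b : Fin (m+1)) => b < a) (fun hab hbc => lt_trans hbc hab) _ ?_
  intro i hi
  rw [List.length_take, hlen] at hi
  have hi1 : i + 1 < m + 1 := by omega
  rw [List.getElem_take, List.getElem_take, List.getElem_ofFn, List.getElem_ofFn]
  have := (hchar (i+1) (by omega) hi1).mpr (by omega)
  convert this using 3 <;> omega

lemma valley_drop_pairwise (σ : Equiv.Perm (Fin (m+1))) (k : ℕ) (hk : k < m+1)
    (hd : descSet σ = Finset.Icc 1 k) :
    ((List.ofFn σ).drop k).Pairwise (· < ·) := by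
  have hchar := (descSet_eq_Icc_iff σ k hk).mp hd
  have hlen : (List.ofFn σ).length = m + 1 := by simp
  refine pairwise_of_adjacent (fun (a b : Fin (m+1)) => a < b) (fun hab hbc => lt_trans hab hbc) _ ?_
  intro i hi
  rw [List.length_drop, hlen] at hi
  rw [List.getElem_drop, List.getElem_drop, List.getElem_ofFn, List.getElem_ofFn]
  have hne : σ ⟨k + i, by omega⟩ ≠ σ ⟨k + (i+1), by omega⟩ := by
    intro h
    have := σ.injective h
    simp only [Fin.mk.injEq] at this
    omega
  have hnotlt : ¬ σ ⟨k + (i+1), by omega⟩ < σ ⟨k + i, by omega⟩ := by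
    have h2 := (hchar (k+i+1) (by omega) (by omega)).not.mpr (by omega)
    intro hcon
    apply h2
    convert hcon using 3 <;> omega
  have := lt_of_le_of_ne (not_lt.mp hnotlt) hne
  convert this using 3 <;> omega

lemma valley_adj_lt (σ : Equiv.Perm (Fin (m+1))) (k : ℕ) (hk : k < m+1)
    (hd : descSet σ = Finset.Icc 1 k) (a : ℕ) (ha : k ≤ a) (h : a + 1 < m+1) :
    σ ⟨a, by omega⟩ < σ ⟨a + 1, h⟩ := by
  have hchar := (descSet_eq_Icc_iff σ k hk).mp hd
  have hne : σ ⟨a, by omega⟩ ≠ σ ⟨a + 1, h⟩ := by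
    intro hcon
    have := σ.injective hcon
    simp only [Fin.mk.injEq] at this
    omega
  have hnotlt : ¬ σ ⟨a + 1, h⟩ < σ ⟨a, by omega⟩ := by
    have h2 := (hchar (a+1) (by omega) (by omega)).not.mpr (by omega)
    intro hcon
    apply h2
    convert hcon using 3 <;> omega
  exact lt_of_le_of_ne (not_lt.mp hnotlt) hne

lemma valley_chain_lt (σ : Equiv.Perm (Fin (m+1))) (k : ℕ) (hk : k < m+1)
    (hd : descSet σ = Finset.Icc 1 k) :
    ∀ (d a : ℕ), k ≤ a → ∀ (h : a + d + 1 < m+1),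
      σ ⟨a, by omega⟩ < σ ⟨a + d + 1, h⟩ := by
  intro d
  induction d with
  | zero => intro a ha h; exact valley_adj_lt σ k hk hd a ha h
  | succ d ih =>
    intro a ha h
    have h1 := ih a ha (by omega)
    have h2 := valley_adj_lt σ k hk hd (a+d+1) (by omega) (by omega)
    calc σ ⟨a, by omega⟩ < σ ⟨a + d + 1, by omega⟩ := h1
      _ < σ ⟨a + (d+1) + 1, h⟩ := by convert h2 using 3 <;> omega

lemma valley_chain_gt (σ : Equiv.Perm (Fin (m+1))) (k : ℕ) (hk : k < m+1)
    (hd : descSet σ = Finset.Icc 1 k) :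
    ∀ (d a : ℕ), ∀ (h : a + d + 1 ≤ k),
      σ ⟨a + d + 1, by omega⟩ < σ ⟨a, by omega⟩ := by
  have hchar := (descSet_eq_Icc_iff σ k hk).mp hd
  intro d
  induction d with
  | zero =>
    intro a h
    have := (hchar (a+1) (by omega) (by omega)).mpr (by omega)
    convert this using 3 <;> omega
  | succ d ih =>
    intro a h
    have h1 := ih a (by omega)
    have h2 := (hchar (a+d+2) (by omega) (by omega)).mpr (by omega)
    calc σ ⟨a + (d+1) + 1, by omega⟩ < σ ⟨a + d + 1, by omega⟩ := by
          convert h2 using 3 <;> omega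
      _ < σ ⟨a, by omega⟩ := h1

lemma valley_apply_zero (σ : Equiv.Perm (Fin (m+1))) (k : ℕ) (hk : k < m+1)
    (hd : descSet σ = Finset.Icc 1 k) :
    σ ⟨k, hk⟩ = 0 := by
  set j₀ := σ.symm 0 with hj₀
  have hσj₀ : σ j₀ = 0 := σ.apply_symm_apply 0
  have hj₀k : (j₀ : ℕ) = k := by
    by_contra hne
    rcases lt_or_gt_of_ne hne with hlt | hgt
    · have := valley_chain_gt σ k hk hd (k - (j₀:ℕ) - 1) (j₀:ℕ) (by omega)
      have e : (j₀:ℕ) + (k - (j₀:ℕ) - 1) + 1 = k := by omega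
      rw [show (⟨(j₀:ℕ), by omega⟩ : Fin (m+1)) = j₀ from Fin.eta j₀ j₀.isLt, hσj₀] at this
      exact Fin.not_lt_zero _ this
    · have := valley_chain_lt σ k hk hd ((j₀:ℕ) - k - 1) k le_rfl (by omega)
      have e : k + ((j₀:ℕ) - k - 1) + 1 = (j₀:ℕ) := by omega
      rw [show (⟨k + ((j₀:ℕ) - k - 1) + 1, by omega⟩ : Fin (m+1)) = j₀ from Fin.ext e, hσj₀]
        at this
      exact Fin.not_lt_zero _ this
  rw [show (⟨k, hk⟩ : Fin (m+1)) = j₀ from Fin.ext hj₀k.symm, hσj₀]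

end Valley2

section Splits
variable {α : Type*}

lemma splits_sublist {l : List α} {p : List α × List α} (hp : p ∈ splits l) :
    p.1.Sublist l ∧ p.2.Sublist l := by
  induction l generalizing p with
  | nil => simp [splits] at hp; simp [hp]
  | cons b l ih =>
    simp only [splits, List.mem_append, List.mem_map] at hp
    rcases hp with ⟨q, hq, rfl⟩ | ⟨q, hq, rfl⟩
    · exact ⟨List.cons_sublist_cons.mpr (ih hq).1, (ih hq).2.cons b⟩
    · exact ⟨(ih hq).1.cons b, List.cons_sublist_cons.mpr (ih hq).2⟩

lemma nil_mem_splits (l : List α) : (([], l) : List α × List α) ∈ splits l := by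
  induction l with
  | nil => simp [splits]
  | cons b l ih =>
    simp only [splits, List.mem_append, List.mem_map]
    exact Or.inr ⟨([], l), ih, rfl⟩

lemma mem_splits_of_sorted [LinearOrder α] :
    ∀ (l u v : List α), l.Pairwise (· < ·) → u.Pairwise (· < ·) → v.Pairwise (· < ·) →
      (u ++ v).Perm l → (u, v) ∈ splits l := by
  intro l
  induction l with
  | nil =>
    intro u v _ _ _ hperm
    have h := List.append_eq_nil_iff.mp hperm.eq_nil
    rw [h.1, h.2]
    simp [splits]
  | cons b l ih =>
    intro u v hl hu hv hperm
    have hb : b ∈ u ++ v := hperm.mem_iff.mpr List.mem_cons_self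
    have hlb : ∀ c ∈ l, b < c := (List.pairwise_cons.mp hl).1
    have hl' : l.Pairwise (· < ·) := (List.pairwise_cons.mp hl).2
    rcases List.mem_append.mp hb with hbu | hbv
    · -- b is the head of u
      cases u with
      | nil => simp at hbu
      | cons c u' =>
        have hcb : c = b := by
          by_contra hne
          have hbu' : b ∈ u' := by
            rcases List.mem_cons.mp hbu with h | h
            · exact absurd h.symm hne
            · exact h
          have h1 : c < b := (List.pairwise_cons.mp hu).1 b hbu'
          have h2 : c ∈ b :: l := hperm.subset (by simp)
          rcases List.mem_cons.mp h2 with h | h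
          · exact hne h
          · exact absurd h1 (not_lt.mpr (hlb c h).le)
        subst hcb
        have hperm' : (u' ++ v).Perm l := by
          have : (c :: (u' ++ v)).Perm (c :: l) := by simpa using hperm
          exact this.cons_inv
        have := ih u' v hl' (List.pairwise_cons.mp hu).2 hv hperm'
        simp only [splits, List.mem_append, List.mem_map]
        exact Or.inl ⟨(u', v), this, rfl⟩
    · -- b is the head of v
      cases v with
      | nil => simp at hbv
      | cons c v' =>
        have hcb : c = b := by
          by_contra hne
          have hbv' : b ∈ v' := by
            rcases List.mem_cons.mp hbv with h | h
            · exact absurd h.symm hne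
            · exact h
          have h1 : c < b := (List.pairwise_cons.mp hv).1 b hbv'
          have h2 : c ∈ b :: l := hperm.subset (by simp)
          rcases List.mem_cons.mp h2 with h | h
          · exact hne h
          · exact absurd h1 (not_lt.mpr (hlb c h).le)
        subst hcb
        have hperm' : (u ++ v').Perm l := by
          have : (c :: (u ++ v')).Perm (c :: l) := (List.perm_middle.symm.trans hperm)
          exact this.cons_inv
        have := ih u v' hl' hu (List.pairwise_cons.mp hv).2 hperm'
        simp only [splits, List.mem_append, List.mem_map]
        exact Or.inr ⟨(u, v'), this, rfl⟩

end Splits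

section Final
variable {m : ℕ}

/-- the list `[1, 2, …, m]` in `Fin (m+1)` -/
def lIdx (m : ℕ) : List (Fin (m+1)) := (List.finRange m).map Fin.succ

lemma lIdx_sorted : (lIdx m).Pairwise (· < ·) :=
  (List.pairwise_lt_finRange m).map Fin.succ (fun _ _ h => Fin.succ_lt_succ_iff.mpr h)

lemma lIdx_nodup : (lIdx m).Nodup := lIdx_sorted.imp (fun h => ne_of_lt h)

lemma lIdx_ne_zero : ∀ a ∈ lIdx m, a ≠ 0 := by
  intro a ha
  simp only [lIdx, List.mem_map] at ha
  obtain ⟨b, -, rfl⟩ := ha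
  exact Fin.succ_ne_zero b

lemma finRange_succ_eq : List.finRange (m+1) = 0 :: lIdx m := List.finRange_succ

lemma Lp_perm {p : List (Fin (m+1)) × List (Fin (m+1))} (hp : p ∈ splits (lIdx m)) :
    (p.1.reverse ++ 0 :: p.2).Perm (List.finRange (m+1)) := by
  have h0 : (p.1.reverse ++ 0 :: p.2).Perm (0 :: (p.1.reverse ++ p.2)) := List.perm_middle
  have h1 : (p.1.reverse ++ p.2).Perm (p.1 ++ p.2) := (List.reverse_perm p.1).append_right p.2
  rw [finRange_succ_eq]
  exact h0.trans ((h1.trans (splits_perm hp)).cons 0)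

lemma Lp_length {p : List (Fin (m+1)) × List (Fin (m+1))} (hp : p ∈ splits (lIdx m)) :
    (p.1.reverse ++ 0 :: p.2).length = m + 1 := by
  rw [(Lp_perm hp).length_eq, List.length_finRange]

lemma Lp_nodup {p : List (Fin (m+1)) × List (Fin (m+1))} (hp : p ∈ splits (lIdx m)) :
    (p.1.reverse ++ 0 :: p.2).Nodup :=
  (Lp_perm hp).nodup_iff.mpr (List.nodup_finRange (m+1))

noncomputable def permOf' (L : List (Fin (m+1))) : Equiv.Perm (Fin (m+1)) :=
  if h : L.length = m+1 ∧ L.Nodup then permOf L h.1 h.2 else 1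

lemma permOf'_eq (L : List (Fin (m+1))) (h1 : L.length = m+1) (h2 : L.Nodup) :
    permOf' L = permOf L h1 h2 := dif_pos ⟨h1, h2⟩

lemma descSet_permOf'_splits {p : List (Fin (m+1)) × List (Fin (m+1))}
    (hp : p ∈ splits (lIdx m)) :
    descSet (permOf' (p.1.reverse ++ 0 :: p.2)) = Finset.Icc 1 p.1.length := by
  rw [permOf'_eq _ (Lp_length hp) (Lp_nodup hp)]
  refine descSet_permOf p.1 p.2 ?_ ?_ ?_ ?_ _ _
  · exact List.Pairwise.sublist (splits_sublist hp).1 lIdx_sorted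
  · exact List.Pairwise.sublist (splits_sublist hp).2 lIdx_sorted
  · exact fun a ha => lIdx_ne_zero a ((splits_sublist hp).1.subset ha)
  · exact fun a ha => lIdx_ne_zero a ((splits_sublist hp).2.subset ha)

lemma ofFn_perm_finRange (σ : Equiv.Perm (Fin (m+1))) :
    (List.ofFn σ).Perm (List.finRange (m+1)) := by
  refine List.perm_of_nodup_nodup_toFinset_eq (List.nodup_ofFn.mpr σ.injective)
    (List.nodup_finRange (m+1)) ?_
  ext a
  simp only [List.mem_toFinset, List.mem_ofFn, List.mem_finRange, Set.mem_range, iff_true]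
  exact ⟨σ.symm a, σ.apply_symm_apply a⟩

/-- decomposition of a valley word -/
lemma valley_decomp (σ : Equiv.Perm (Fin (m+1))) (k : ℕ) (hk : k < m+1)
    (hd : descSet σ = Finset.Icc 1 k) :
    (List.ofFn σ).take k ++ 0 :: (List.ofFn σ).drop (k+1) = List.ofFn σ := by
  have hlen : (List.ofFn σ).length = m + 1 := by simp
  have hkl : k < (List.ofFn σ).length := by omega
  have h0 : (List.ofFn σ)[k]'hkl = 0 := by
    rw [List.getElem_ofFn]
    exact valley_apply_zero σ k hk hd
  rw [← h0, ← List.drop_eq_getElem_cons hkl, List.take_append_drop]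

lemma valley_bwd_mem (σ : Equiv.Perm (Fin (m+1))) (k : ℕ) (hk : k < m+1)
    (hd : descSet σ = Finset.Icc 1 k) :
    ((((List.ofFn σ).take k).reverse), (List.ofFn σ).drop (k+1)) ∈ splits (lIdx m) := by
  have hlen : (List.ofFn σ).length = m + 1 := by simp
  have hp1 := valley_take_pairwise σ k hk hd
  have hp2 := valley_drop_pairwise σ k hk hd
  have hu : ((List.ofFn σ).take k).reverse.Pairwise (· < ·) := by
    rw [List.pairwise_reverse]
    have hsub : ((List.ofFn σ).take k).Sublist ((List.ofFn σ).take (k+1)) := by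
      rw [show (List.ofFn σ).take k = ((List.ofFn σ).take (k+1)).take k by
        rw [List.take_take]; congr 1; omega]
      exact List.take_sublist _ _
    exact List.Pairwise.sublist hsub hp1
  have hv : ((List.ofFn σ).drop (k+1)).Pairwise (· < ·) := by
    have hsub : ((List.ofFn σ).drop (k+1)).Sublist ((List.ofFn σ).drop k) := by
      rw [show (List.ofFn σ).drop (k+1) = ((List.ofFn σ).drop k).drop 1 by
        rw [List.drop_drop]]
      exact List.drop_sublist _ _
    exact List.Pairwise.sublist hsub hp2
  have hperm : (((List.ofFn σ).take k).reverse ++ (List.ofFn σ).drop (k+1)).Perm (lIdx m) := by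
    have h1 : ((List.ofFn σ).take k ++ 0 :: (List.ofFn σ).drop (k+1)).Perm
        (0 :: lIdx m) := by
      rw [valley_decomp σ k hk hd, ← finRange_succ_eq]
      exact ofFn_perm_finRange σ
    have h2 : ((List.ofFn σ).take k ++ 0 :: (List.ofFn σ).drop (k+1)).Perm
        (0 :: ((List.ofFn σ).take k ++ (List.ofFn σ).drop (k+1))) := List.perm_middle
    have h3 : ((List.ofFn σ).take k ++ (List.ofFn σ).drop (k+1)).Perm (lIdx m) :=
      (h2.symm.trans h1).cons_inv
    exact ((List.reverse_perm _).append_right _).trans h3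
  exact mem_splits_of_sorted (lIdx m) _ _ lIdx_sorted hu hv hperm

end Final

/-- the Dynkin element `𝒟_n = Σ_{i=0}^{n-1} (-1)^i D_{={1,…,i}}`
realizes the iterated bracketing. -/
theorem dynkin_iterated_bracket {A : Type*} [Ring A] (n : ℕ) (hn : 1 ≤ n) (x : Fin n → A) :
    iterBracket (List.ofFn x) =
      ∑ i ∈ Finset.range n, (-1 : A) ^ i *
        ∑ σ ∈ Finset.univ.filter
            (fun σ : Equiv.Perm (Fin n) => descSet σ = Finset.Icc 1 i),
          (List.ofFn (fun j => x (σ j))).prod := by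
  classical
  obtain ⟨m, rfl⟩ : ∃ m, n = m + 1 := ⟨n - 1, by omega⟩
  -- LHS: expand the bracket as a sum over splits
  have hofn : List.ofFn x = x 0 :: (lIdx m).map x := by
    rw [List.ofFn_succ, lIdx, List.map_map, List.ofFn_eq_map]
    rfl
  rw [hofn, iterBracket_cons, dyn_splits x (lIdx m) (x 0),
    ← List.sum_toFinset _ (splits_nodup lIdx_nodup)]
  -- RHS: collect into a single sum over valley permutations
  set P : Equiv.Perm (Fin (m+1)) → A := fun σ => (List.ofFn (fun j => x (σ j))).prod with hP
  set V := Finset.univ.filter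
    (fun σ : Equiv.Perm (Fin (m+1)) => descSet σ = Finset.Icc 1 (descSet σ).card) with hV
  have hfilter : ∀ i ∈ Finset.range (m+1),
      Finset.univ.filter (fun σ : Equiv.Perm (Fin (m+1)) => descSet σ = Finset.Icc 1 i)
        = V.filter (fun σ => (descSet σ).card = i) := by
    intro i _
    ext σ
    simp only [hV, Finset.mem_filter, Finset.mem_univ, true_and]
    constructor
    · intro h
      have hc : (descSet σ).card = i := by rw [h, Nat.card_Icc]; omega
      exact ⟨by rw [hc]; exact h, hc⟩
    · rintro ⟨hval, hc⟩
      rw [hval, hc]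
  have hRHS : ∑ i ∈ Finset.range (m+1), (-1 : A) ^ i *
        ∑ σ ∈ Finset.univ.filter
            (fun σ : Equiv.Perm (Fin (m+1)) => descSet σ = Finset.Icc 1 i), P σ
      = ∑ σ ∈ V, (-1 : A) ^ (descSet σ).card * P σ := by
    rw [← Finset.sum_fiberwise_of_maps_to (g := fun σ => (descSet σ).card)
      (t := Finset.range (m+1))
      (fun σ _ => Finset.mem_range.mpr (Nat.lt_succ_of_le (card_descSet_le σ)))
      (fun σ => (-1 : A) ^ (descSet σ).card * P σ)]
    refine Finset.sum_congr rfl (fun i hi => ?_)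
    rw [hfilter i hi, Finset.mul_sum]
    refine Finset.sum_congr rfl (fun σ hσ => ?_)
    rw [(Finset.mem_filter.mp hσ).2]
  rw [hRHS]
  -- the bijection between splits and valley permutations
  refine Finset.sum_nbij' (fun p => permOf' (p.1.reverse ++ 0 :: p.2))
    (fun σ => (((List.ofFn σ).take ((descSet σ).card)).reverse,
      (List.ofFn σ).drop ((descSet σ).card + 1))) ?_ ?_ ?_ ?_ ?_
  · -- maps into V
    intro p hp
    have hp' := List.mem_toFinset.mp hp
    have hd := descSet_permOf'_splits hp'
    simp only [hV, Finset.mem_filter, Finset.mem_univ, true_and]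
    rw [hd, Nat.card_Icc, Nat.add_sub_cancel]
  · -- maps into splits
    intro σ hσ
    have hd : descSet σ = Finset.Icc 1 (descSet σ).card :=
      (Finset.mem_filter.mp hσ).2
    have hk : (descSet σ).card < m + 1 := by have := card_descSet_le σ; omega
    exact List.mem_toFinset.mpr (valley_bwd_mem σ _ hk hd)
  · -- left inverse
    intro p hp
    have hp' := List.mem_toFinset.mp hp
    have hd := descSet_permOf'_splits hp'
    have hcard : (descSet (permOf' (p.1.reverse ++ 0 :: p.2))).card = p.1.length := by
      rw [hd, Nat.card_Icc]; omega
    have hofn2 : List.ofFn (permOf' (p.1.reverse ++ 0 :: p.2)) = p.1.reverse ++ 0 :: p.2 := by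
      rw [permOf'_eq _ (Lp_length hp') (Lp_nodup hp')]
      exact ofFn_permOf _ _ _
    have h1 : ((List.ofFn (permOf' (p.1.reverse ++ 0 :: p.2))).take
        ((descSet (permOf' (p.1.reverse ++ 0 :: p.2))).card)).reverse = p.1 := by
      rw [hofn2, hcard, show p.1.length = p.1.reverse.length from List.length_reverse.symm,
        List.take_left, List.reverse_reverse]
    have h2 : (List.ofFn (permOf' (p.1.reverse ++ 0 :: p.2))).drop
        ((descSet (permOf' (p.1.reverse ++ 0 :: p.2))).card + 1) = p.2 := by
      rw [hofn2, hcard, show p.1.length + 1 = p.1.reverse.length + 1 by rw [List.length_reverse],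
        List.drop_append]
      simp
    exact Prod.ext h1 h2
  · -- right inverse
    intro σ hσ
    have hd : descSet σ = Finset.Icc 1 (descSet σ).card :=
      (Finset.mem_filter.mp hσ).2
    have hk : (descSet σ).card < m + 1 := by have := card_descSet_le σ; omega
    have hw : ((((List.ofFn σ).take ((descSet σ).card)).reverse).reverse ++
        0 :: (List.ofFn σ).drop ((descSet σ).card + 1)) = List.ofFn σ := by
      rw [List.reverse_reverse]
      exact valley_decomp σ _ hk hd
    beta_reduce
    rw [hw, permOf'_eq _ (by simp) (List.nodup_ofFn.mpr σ.injective)]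
    refine Equiv.ext (fun j => ?_)
    rw [permOf_apply, List.getElem_ofFn]
  · -- terms agree
    intro p hp
    have hp' := List.mem_toFinset.mp hp
    have hd := descSet_permOf'_splits hp'
    have hcard : (descSet (permOf' (p.1.reverse ++ 0 :: p.2))).card = p.1.length := by
      rw [hd, Nat.card_Icc]; omega
    have hofn2 : List.ofFn (permOf' (p.1.reverse ++ 0 :: p.2)) = p.1.reverse ++ 0 :: p.2 := by
      rw [permOf'_eq _ (Lp_length hp') (Lp_nodup hp')]
      exact ofFn_permOf _ _ _
    rw [hP]
    show (-1 : A) ^ p.1.length * ((p.1.reverse.map x).prod * x 0 * (p.2.map x).prod)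
      = (-1 : A) ^ (descSet (permOf' (p.1.reverse ++ 0 :: p.2))).card *
        (List.ofFn (fun j => x ((permOf' (p.1.reverse ++ 0 :: p.2)) j))).prod
    rw [hcard, show (List.ofFn (fun j => x ((permOf' (p.1.reverse ++ 0 :: p.2)) j)))
        = List.map x (List.ofFn (permOf' (p.1.reverse ++ 0 :: p.2))) from
        List.map_ofFn.symm, hofn2, List.map_append, List.map_cons, List.prod_append,
      List.prod_cons, mul_assoc]
end

section
/- Let A be a Banach algebra with unit and H : ℝ → A continuous. Then for every t ≥ 0 the time-ordered exponential series T(exp ∫_0^t H(x)dx) := 1 + Σ_{n≥1} H_n(t) converges absolutely in A, and the function A(t) := T(exp ∫_0^t H(x)dx) is differentiable on [0,∞) and solves the evolution equation A'(t) = A(t)·H(t) with initial condition A(0) = 1. -/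
open MeasureTheory

/-- The simplex `Δ_t^n = {0 ≤ t₁ ≤ ⋯ ≤ tₙ ≤ t}` inside `Fin n → ℝ`. -/
def simplex (n : ℕ) (t : ℝ) : Set (Fin n → ℝ) :=
  {u | (∀ i, 0 ≤ u i ∧ u i ≤ t) ∧ ∀ i j, i ≤ j → u i ≤ u j}

variable {A : Type*} [NormedRing A] [NormedAlgebra ℝ A] [CompleteSpace A]

/-- The iterated integral `H_σ(t) = ∫_{Δ_t^n} H(t_{σ(1)})⋯H(t_{σ(n)}) dt₁⋯dtₙ`. -/
noncomputable def Hperm (H : ℝ → A) {n : ℕ} (σ : Equiv.Perm (Fin n)) (t : ℝ) : A :=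
  ∫ u in simplex n t, (List.ofFn (fun j => H (u (σ j)))).prod

/-- `H_n(t) = ∫_{Δ_t^n} H(t₁)⋯H(tₙ) dt₁⋯dtₙ`, with `H_0(t) = 1`. -/
noncomputable def Hn (H : ℝ → A) : ℕ → ℝ → A
  | 0, _ => 1
  | (n + 1), t => Hperm H (1 : Equiv.Perm (Fin (n + 1))) t

/-- The iterated integral evaluated on the Dynkin element:
`H_{𝒟_m}(t) = Σ_{j=0}^{m-1} (-1)^j H_{D_{={1,…,j}}^{(m)}}(t)`. -/
noncomputable def HDyn (H : ℝ → A) (m : ℕ) (t : ℝ) : A :=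
  ∑ j ∈ Finset.range m, (-1 : ℝ) ^ j •
    ∑ σ ∈ Finset.univ.filter
        (fun σ : Equiv.Perm (Fin m) => descSet σ = Finset.Icc 1 j),
      Hperm H σ t




set_option linter.unusedSectionVars false

lemma isClosed_simplex (n : ℕ) (t : ℝ) : IsClosed (simplex n t) := by
  have h1 : IsClosed {u : Fin n → ℝ | ∀ i, 0 ≤ u i ∧ u i ≤ t} := by
    rw [Set.setOf_forall]
    refine isClosed_iInter fun i => ?_
    exact IsClosed.inter (isClosed_le continuous_const (continuous_apply i))
      (isClosed_le (continuous_apply i) continuous_const)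
  have h2 : IsClosed {u : Fin n → ℝ | ∀ i j : Fin n, i ≤ j → u i ≤ u j} := by
    rw [Set.setOf_forall]
    refine isClosed_iInter fun i => ?_
    rw [Set.setOf_forall]
    refine isClosed_iInter fun j => ?_
    by_cases h : i ≤ j
    · simp only [h, forall_true_left]
      exact isClosed_le (continuous_apply i) (continuous_apply j)
    · simp only [h]
      simp only [false_implies, Set.setOf_true]
      exact isClosed_univ
  exact h1.inter h2

lemma isCompact_simplex (n : ℕ) (t : ℝ) : IsCompact (simplex n t) := by
  refine IsCompact.of_isClosed_subset (isCompact_Icc (a := (0 : Fin n → ℝ))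
    (b := fun _ => max t 0)) (isClosed_simplex n t) ?_
  intro u hu
  rw [Set.mem_Icc]
  constructor
  · intro i; exact (hu.1 i).1
  · intro i; exact le_trans (hu.1 i).2 (le_max_left _ _)

lemma measurableSet_simplex (n : ℕ) (t : ℝ) : MeasurableSet (simplex n t) :=
  (isClosed_simplex n t).measurableSet

lemma continuous_prodFn {n : ℕ} {H : ℝ → A} (hH : Continuous H) :
    Continuous (fun u : Fin n → ℝ => (List.ofFn (fun j => H (u j))).prod) := by
  simp only [List.ofFn_eq_map]
  exact continuous_list_prod (f := fun (i : Fin n) (u : Fin n → ℝ) => H (u i)) _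
    (fun i _ => hH.comp (continuous_apply i))

lemma snoc_mem_simplex_iff {n : ℕ} {s t : ℝ} {u : Fin n → ℝ} :
    (Fin.snoc u s : Fin (n+1) → ℝ) ∈ simplex (n+1) t ↔ (s ∈ Set.Icc 0 t ∧ u ∈ simplex n s) := by
  constructor
  · rintro ⟨hb, hm⟩
    have hs : (Fin.snoc u s : Fin (n+1) → ℝ) (Fin.last n) = s := Fin.snoc_last _ _
    refine ⟨⟨by rw [← hs]; exact (hb _).1, by rw [← hs]; exact (hb _).2⟩, ?_, ?_⟩
    · intro i
      have h1 := (hb i.castSucc).1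
      rw [Fin.snoc_castSucc] at h1
      have h2 := hm i.castSucc (Fin.last n) (Fin.le_last _)
      rw [Fin.snoc_castSucc, Fin.snoc_last] at h2
      exact ⟨h1, h2⟩
    · intro i j hij
      have := hm i.castSucc j.castSucc (by simpa using hij)
      rwa [Fin.snoc_castSucc, Fin.snoc_castSucc] at this
  · rintro ⟨⟨hs0, hst⟩, hu, hm⟩
    constructor
    · intro i
      rcases Fin.eq_castSucc_or_eq_last i with ⟨i', rfl⟩ | rfl
      · rw [Fin.snoc_castSucc]
        exact ⟨(hu i').1, le_trans (hu i').2 hst⟩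
      · rw [Fin.snoc_last]; exact ⟨hs0, hst⟩
    · intro i j hij
      rcases Fin.eq_castSucc_or_eq_last i with ⟨i', rfl⟩ | rfl <;>
        rcases Fin.eq_castSucc_or_eq_last j with ⟨j', rfl⟩ | rfl
      · rw [Fin.snoc_castSucc, Fin.snoc_castSucc]
        exact hm i' j' (by simpa using hij)
      · rw [Fin.snoc_castSucc, Fin.snoc_last]
        exact (hu i').2
      · exact absurd (lt_of_le_of_lt hij (Fin.castSucc_lt_last j')) (lt_irrefl _)
      · exact le_refl _

lemma prod_snoc {n : ℕ} (H : ℝ → A) (u : Fin n → ℝ) (s : ℝ) :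
    (List.ofFn (fun j : Fin (n+1) => H ((Fin.snoc u s : Fin (n+1) → ℝ) j))).prod
      = (List.ofFn (fun j : Fin n => H (u j))).prod * H s := by
  rw [List.ofFn_succ']
  simp [List.concat_eq_append, Fin.snoc_castSucc, Fin.snoc_last]

lemma simplex_zero (t : ℝ) : simplex 0 t = Set.univ := by
  ext u
  simp only [simplex, Set.mem_setOf_eq, Set.mem_univ, iff_true]
  exact ⟨fun i => i.elim0, fun i => i.elim0⟩

lemma Hn_eq (H : ℝ → A) (n : ℕ) (t : ℝ) :
    Hn H n t = ∫ u in simplex n t, (List.ofFn (fun j => H (u j))).prod := by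
  cases n with
  | zero =>
      simp only [Hn, List.ofFn_zero, List.prod_nil, simplex_zero]
      rw [Measure.restrict_univ, integral_const]
      have : (volume : Measure (Fin 0 → ℝ)) Set.univ = 1 := by
        simp [MeasureTheory.volume_pi, Measure.pi_univ]
      simp [Measure.real, this]
  | succ n =>
      simp only [Hn, Hperm, Equiv.Perm.one_apply]

lemma integrableOn_prodFn {n : ℕ} {H : ℝ → A} (hH : Continuous H) (t : ℝ) :
    IntegrableOn (fun u : Fin n → ℝ => (List.ofFn (fun j => H (u j))).prod)
      (simplex n t) volume :=
  (continuous_prodFn hH).continuousOn.integrableOn_compact (isCompact_simplex n t)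

lemma Hn_succ_eq (H : ℝ → A) (hH : Continuous H) (n : ℕ) (t : ℝ) (ht : 0 ≤ t) :
    Hn H (n+1) t = ∫ r in (0:ℝ)..t, Hn H n r * H r := by
  classical
  set P : (Fin (n+1) → ℝ) → A := fun v => (List.ofFn (fun j => H (v j))).prod with hP
  set Q : (Fin n → ℝ) → A := fun u => (List.ofFn (fun j => H (u j))).prod with hQ
  set e := MeasurableEquiv.piFinSuccAbove (fun _ : Fin (n+1) => ℝ) (Fin.last n) with he
  have hmp : MeasurePreserving e volume volume :=
    volume_preserving_piFinSuccAbove (fun _ : Fin (n+1) => ℝ) (Fin.last n)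
  have hesymm : ∀ (p : ℝ × (Fin n → ℝ)), e.symm p = (Fin.snoc p.2 p.1 : Fin (n+1) → ℝ) := by
    intro p
    show (Fin.insertNthEquiv (fun _ : Fin (n+1) => ℝ) (Fin.last n)) p = _
    rw [Fin.insertNthEquiv_last]
    rfl
  -- indicator form
  have hInt : Integrable ((simplex (n+1) t).indicator P) (volume : Measure (Fin (n+1) → ℝ)) := by
    rw [integrable_indicator_iff (measurableSet_simplex _ _)]
    exact integrableOn_prodFn hH t
  have key : Hn H (n+1) t
      = ∫ p : ℝ × (Fin n → ℝ), (simplex (n+1) t).indicator P (e.symm p) := by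
    rw [Hn_eq, ← integral_indicator (measurableSet_simplex _ _)]
    exact ((hmp.symm e).integral_comp e.symm.measurableEmbedding _).symm
  rw [key]
  have hIntc : Integrable (fun p : ℝ × (Fin n → ℝ) => (simplex (n+1) t).indicator P (e.symm p))
      (volume : Measure (ℝ × (Fin n → ℝ))) := by
    have := (hmp.symm e).integrable_comp_emb e.symm.measurableEmbedding
      (g := (simplex (n+1) t).indicator P)
    exact this.2 hInt
  rw [Measure.volume_eq_prod] at hIntc ⊢
  rw [MeasureTheory.integral_prod _ hIntc]
  -- inner integral
  have inner : ∀ s : ℝ, (∫ u : Fin n → ℝ, (simplex (n+1) t).indicator P (e.symm (s, u)))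
      = (Set.Icc (0:ℝ) t).indicator (fun s => Hn H n s * H s) s := by
    intro s
    by_cases hs : s ∈ Set.Icc (0:ℝ) t
    · have : ∀ u : Fin n → ℝ, (simplex (n+1) t).indicator P (e.symm (s, u))
          = (simplex n s).indicator (fun u => Q u * H s) u := by
        intro u
        rw [hesymm]
        by_cases hu : u ∈ simplex n s
        · rw [Set.indicator_of_mem (snoc_mem_simplex_iff.2 ⟨hs, hu⟩),
            Set.indicator_of_mem hu]
          exact prod_snoc H u s
        · rw [Set.indicator_of_notMem (fun hmem => hu (snoc_mem_simplex_iff.1 hmem).2),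
            Set.indicator_of_notMem hu]
      rw [Set.indicator_of_mem hs]
      simp only [this]
      rw [integral_indicator (measurableSet_simplex _ _)]
      have hQint : IntegrableOn Q (simplex n s) volume := integrableOn_prodFn hH s
      have : (∫ u in simplex n s, Q u * H s) = (∫ u in simplex n s, Q u) * H s := by
        have := ((ContinuousLinearMap.mul ℝ A).flip (H s)).integral_comp_comm
          (μ := volume.restrict (simplex n s)) (φ := Q) hQint
        simpa using this
      rw [this, ← Hn_eq]
    · rw [Set.indicator_of_notMem hs]
      have : ∀ u : Fin n → ℝ, (simplex (n+1) t).indicator P (e.symm (s, u)) = 0 := by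
        intro u
        rw [hesymm]
        exact Set.indicator_of_notMem (fun hmem => hs (snoc_mem_simplex_iff.1 hmem).1) _
      simp only [this, integral_zero]
  simp only [inner]
  rw [integral_indicator measurableSet_Icc, integral_Icc_eq_integral_Ioc,
    intervalIntegral.integral_of_le ht]

lemma simplex_neg (n : ℕ) {t : ℝ} (ht : t < 0) : simplex (n+1) t = ∅ := by
  ext u
  simp only [simplex, Set.mem_setOf_eq, Set.mem_empty_iff_false, iff_false]
  rintro ⟨hb, -⟩
  exact absurd (le_trans (hb 0).1 (hb 0).2) (not_le.2 ht)

lemma Hn_neg (H : ℝ → A) (n : ℕ) {t : ℝ} (ht : t < 0) : Hn H (n+1) t = 0 := by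
  rw [Hn_eq, simplex_neg n ht, Measure.restrict_empty, integral_zero_measure]

lemma Hn_succ_max (H : ℝ → A) (hH : Continuous H) (n : ℕ) (t : ℝ) :
    Hn H (n+1) t = ∫ r in (0:ℝ)..(max t 0), Hn H n r * H r := by
  rcases le_or_gt 0 t with ht | ht
  · rw [max_eq_left ht]; exact Hn_succ_eq H hH n t ht
  · rw [max_eq_right ht.le, intervalIntegral.integral_same, Hn_neg H n ht]

lemma continuous_Hn (H : ℝ → A) (hH : Continuous H) (n : ℕ) : Continuous (Hn H n) := by
  induction n with
  | zero => exact continuous_const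
  | succ n ih =>
      have hg : Continuous (fun r => Hn H n r * H r) := ih.mul hH
      have : Continuous (fun b : ℝ => ∫ r in (0:ℝ)..b, Hn H n r * H r) :=
        intervalIntegral.continuous_primitive
          (fun a b => hg.intervalIntegrable a b) 0
      have h2 : Continuous fun t : ℝ => max t 0 := continuous_id.max continuous_const
      have h3 := this.comp h2
      have : Hn H (n+1) = fun t => ∫ r in (0:ℝ)..(max t 0), Hn H n r * H r :=
        funext fun t => Hn_succ_max H hH n t
      rw [this]
      exact h3

lemma Hn_norm_le (H : ℝ → A) (hH : Continuous H) {T M : ℝ} (hM0 : 0 ≤ M)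
    (hM : ∀ r ∈ Set.Icc (0:ℝ) T, ‖H r‖ ≤ M) :
    ∀ (n : ℕ), ∀ t ∈ Set.Icc (0:ℝ) T,
      ‖Hn H n t‖ ≤ ‖(1:A)‖ * (M ^ n * t ^ n / n.factorial) := by
  intro n
  induction n with
  | zero =>
      intro t ht
      simp [Hn]
  | succ n ih =>
      intro t ht
      obtain ⟨ht0, htT⟩ := ht
      rw [Hn_succ_eq H hH n t ht0]
      calc ‖∫ r in (0:ℝ)..t, Hn H n r * H r‖
          ≤ ∫ r in (0:ℝ)..t, ‖Hn H n r * H r‖ :=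
            intervalIntegral.norm_integral_le_integral_norm ht0
        _ ≤ ∫ r in (0:ℝ)..t, (‖(1:A)‖ * (M ^ n * M / n.factorial)) * r ^ n := by
            apply intervalIntegral.integral_mono_on ht0
            · exact ((continuous_Hn H hH n).mul hH).norm.intervalIntegrable 0 t
            · exact (Continuous.intervalIntegrable (by continuity) 0 t)
            · intro r hr
              have hr' : r ∈ Set.Icc (0:ℝ) T := ⟨hr.1, le_trans hr.2 htT⟩
              calc ‖Hn H n r * H r‖ ≤ ‖Hn H n r‖ * ‖H r‖ := norm_mul_le _ _
                _ ≤ (‖(1:A)‖ * (M ^ n * r ^ n / n.factorial)) * M := by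
                    exact mul_le_mul (ih r hr') (hM r hr') (norm_nonneg _)
                      (mul_nonneg (norm_nonneg _) (div_nonneg
                        (mul_nonneg (pow_nonneg hM0 n) (pow_nonneg hr'.1 n))
                        (Nat.cast_nonneg _)))
                _ = (‖(1:A)‖ * (M ^ n * M / n.factorial)) * r ^ n := by ring
        _ = (‖(1:A)‖ * (M ^ n * M / n.factorial)) * (t ^ (n+1) / (n+1)) := by
            rw [intervalIntegral.integral_const_mul, integral_pow]
            ring
        _ = ‖(1:A)‖ * (M ^ (n+1) * t ^ (n+1) / (n+1).factorial) := by
            rw [Nat.factorial_succ]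
            push_cast
            have h1 : (n.factorial : ℝ) ≠ 0 := Nat.cast_ne_zero.2 n.factorial_ne_zero
            have h2 : ((n:ℝ) + 1) ≠ 0 := by positivity
            field_simp
            ring

lemma Hn_zero (H : ℝ → A) (hH : Continuous H) (n : ℕ) : Hn H (n+1) 0 = 0 := by
  rw [Hn_succ_eq H hH n 0 le_rfl, intervalIntegral.integral_same]

lemma Hn_max (H : ℝ → A) (hH : Continuous H) (n : ℕ) (t : ℝ) :
    Hn H n t = Hn H n (max t 0) := by
  rcases le_or_gt 0 t with ht | ht
  · rw [max_eq_left ht]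
  · rw [max_eq_right ht.le]
    cases n with
    | zero => rfl
    | succ n => rw [Hn_neg H n ht, Hn_zero H hH n]

/-- bound data on `[0,T]`. -/
lemma exists_bound (H : ℝ → A) (hH : Continuous H) (T : ℝ) :
    ∃ M : ℝ, 0 ≤ M ∧ ∀ r ∈ Set.Icc (0:ℝ) T, ‖H r‖ ≤ M := by
  obtain ⟨M, hM⟩ := (isCompact_Icc (a := (0:ℝ)) (b := T)).exists_bound_of_continuousOn
    hH.continuousOn
  exact ⟨max M 0, le_max_right _ _, fun r hr => le_trans (hM r hr) (le_max_left _ _)⟩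

lemma summable_norm_Hn (H : ℝ → A) (hH : Continuous H) (t : ℝ) :
    Summable (fun n : ℕ => ‖Hn H n t‖) := by
  obtain ⟨M, hM0, hM⟩ := exists_bound H hH (max t 0)
  have hb := Hn_norm_le H hH hM0 hM
  have hsum : Summable (fun n : ℕ => ‖(1:A)‖ * ((M * max t 0) ^ n / n.factorial)) :=
    (Real.summable_pow_div_factorial (M * max t 0)).mul_left _
  refine Summable.of_nonneg_of_le (fun n => norm_nonneg _) (fun n => ?_) hsum
  rw [Hn_max H hH n t]
  calc ‖Hn H n (max t 0)‖ ≤ ‖(1:A)‖ * (M ^ n * (max t 0) ^ n / n.factorial) :=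
        hb n _ ⟨le_max_right _ _, le_rfl⟩
    _ = ‖(1:A)‖ * ((M * max t 0) ^ n / n.factorial) := by rw [mul_pow]

lemma summable_Hn (H : ℝ → A) (hH : Continuous H) (t : ℝ) :
    Summable (fun n : ℕ => Hn H n t) :=
  (summable_norm_Hn H hH t).of_norm

noncomputable def SS (H : ℝ → A) : ℝ → A := fun s => ∑' n : ℕ, Hn H n s

lemma SS_zero_le (H : ℝ → A) (hH : Continuous H) {t : ℝ} (ht : t ≤ 0) : SS H t = 1 := by
  rcases lt_or_eq_of_le ht with ht | rfl
  · rw [SS, tsum_eq_single 0 (fun n hn => ?_)]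
    · rfl
    · obtain ⟨m, rfl⟩ := Nat.exists_eq_succ_of_ne_zero hn
      exact Hn_neg H m ht
  · rw [SS, tsum_eq_single 0 (fun n hn => ?_)]
    · rfl
    · obtain ⟨m, rfl⟩ := Nat.exists_eq_succ_of_ne_zero hn
      exact Hn_zero H hH m

lemma continuous_SS (H : ℝ → A) (hH : Continuous H) : Continuous (SS H) := by
  rw [continuous_iff_continuousAt]
  intro t
  set T : ℝ := |t| + 1 with hT
  have hTpos : 0 < T := by positivity
  obtain ⟨M, hM0, hM⟩ := exists_bound H hH T
  have hb := Hn_norm_le H hH hM0 hM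
  set f : ℕ → ℝ → A := fun n s => Hn H n (min (max s 0) T) with hf
  have hmem : ∀ s : ℝ, min (max s 0) T ∈ Set.Icc (0:ℝ) T := fun s =>
    ⟨le_min (le_max_right _ _) hTpos.le, min_le_right _ _⟩
  have hcont : ∀ n, Continuous (f n) := fun n =>
    (continuous_Hn H hH n).comp ((continuous_id.max continuous_const).min continuous_const)
  have hbound : ∀ (n : ℕ) (s : ℝ), ‖f n s‖ ≤ ‖(1:A)‖ * ((M * T) ^ n / n.factorial) := by
    intro n s
    calc ‖f n s‖ ≤ ‖(1:A)‖ * (M ^ n * (min (max s 0) T) ^ n / n.factorial) :=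
          hb n _ (hmem s)
      _ ≤ ‖(1:A)‖ * ((M * T) ^ n / n.factorial) := by
          rw [mul_pow]
          gcongr
          exact (hmem s).2
  have hcf : Continuous (fun s => ∑' n : ℕ, f n s) :=
    continuous_tsum hcont ((Real.summable_pow_div_factorial (M * T)).mul_left _) hbound
  have heq : ∀ s ∈ Set.Iio T, SS H s = ∑' n : ℕ, f n s := by
    intro s hs
    have : min (max s 0) T = max s 0 :=
      min_eq_left (max_le (le_of_lt hs) hTpos.le)
    rw [SS]
    simp only [hf, this]
    exact tsum_congr fun n => by rw [← Hn_max H hH n s]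
  have hmem : t ∈ Set.Iio T := by
    rw [Set.mem_Iio, hT]
    nlinarith [abs_nonneg t, le_abs_self t]
  exact hcf.continuousAt.congr
    (Filter.eventuallyEq_of_mem (Iio_mem_nhds hmem) (fun s hs => (heq s hs).symm))

lemma SS_integral_eq (H : ℝ → A) (hH : Continuous H) {s : ℝ} (hs : 0 ≤ s) :
    SS H s = 1 + ∫ r in (0:ℝ)..s, SS H r * H r := by
  obtain ⟨M, hM0, hM⟩ := exists_bound H hH s
  have hb := Hn_norm_le H hH hM0 hM
  set g : ℕ → ℝ → A := fun n r => Hn H n r * H r with hg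
  have hgc : ∀ n, Continuous (g n) := fun n => (continuous_Hn H hH n).mul hH
  have hgint : ∀ n, Integrable (g n) (volume.restrict (Set.Ioc 0 s)) := by
    intro n
    rw [← IntegrableOn]
    exact ((hgc n).continuousOn).integrableOn_compact isCompact_Icc |>.mono_set Set.Ioc_subset_Icc_self
  have hnormint : ∀ n, Integrable (fun r => ‖g n r‖) (volume.restrict (Set.Ioc 0 s)) :=
    fun n => (hgint n).norm
  have hsum2 : Summable (fun n => ∫ r in Set.Ioc (0:ℝ) s, ‖g n r‖) := by
    have hsum : Summable (fun n : ℕ => (‖(1:A)‖ * ((M*s) ^ n / n.factorial) * M) * s) :=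
      (((Real.summable_pow_div_factorial (M*s)).mul_left _).mul_right _).mul_right _
    refine Summable.of_nonneg_of_le
      (fun n => integral_nonneg (fun r => norm_nonneg _)) (fun n => ?_) hsum
    calc (∫ r in Set.Ioc (0:ℝ) s, ‖g n r‖)
        ≤ ∫ _r in Set.Ioc (0:ℝ) s, (‖(1:A)‖ * ((M*s) ^ n / n.factorial) * M) := by
          apply setIntegral_mono_on (hnormint n) (integrable_const _) measurableSet_Ioc
          intro r hr
          have hr' : r ∈ Set.Icc (0:ℝ) s := Set.Ioc_subset_Icc_self hr
          calc ‖Hn H n r * H r‖ ≤ ‖Hn H n r‖ * ‖H r‖ := norm_mul_le _ _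
            _ ≤ (‖(1:A)‖ * (M ^ n * r ^ n / n.factorial)) * M :=
                mul_le_mul (hb n r hr') (hM r hr') (norm_nonneg _)
                  (mul_nonneg (norm_nonneg _) (div_nonneg
                    (mul_nonneg (pow_nonneg hM0 n) (pow_nonneg hr'.1 n)) (Nat.cast_nonneg _)))
            _ ≤ ‖(1:A)‖ * ((M*s) ^ n / n.factorial) * M := by
                have hrn : r ^ n ≤ s ^ n := pow_le_pow_left₀ hr'.1 hr'.2 n
                have hinner : M ^ n * r ^ n / (n.factorial:ℝ) ≤ (M*s) ^ n / n.factorial := by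
                  rw [mul_pow, div_eq_mul_inv, div_eq_mul_inv]
                  exact mul_le_mul_of_nonneg_right
                    (mul_le_mul_of_nonneg_left hrn (pow_nonneg hM0 n))
                    (inv_nonneg.2 (Nat.cast_nonneg _))
                exact mul_le_mul_of_nonneg_right
                  (mul_le_mul_of_nonneg_left hinner (norm_nonneg _)) hM0
      _ = (‖(1:A)‖ * ((M*s) ^ n / n.factorial) * M) * s := by
          rw [setIntegral_const]
          simp [Real.volume_Ioc, max_eq_left hs, smul_eq_mul, mul_comm]
  have hkey := hasSum_integral_of_summable_integral_norm (μ := volume.restrict (Set.Ioc 0 s))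
    hgint hsum2
  -- identify pointwise sum
  have hpt : ∀ r : ℝ, (∑' n : ℕ, g n r) = SS H r * H r := fun r =>
    (summable_Hn H hH r).tsum_mul_right (H r)
  rw [show (fun r => ∑' n : ℕ, g n r) = fun r => SS H r * H r from funext hpt] at hkey
  have h1 : ∀ n : ℕ, (∫ r in Set.Ioc (0:ℝ) s, g n r) = Hn H (n+1) s := by
    intro n
    rw [Hn_succ_eq H hH n s hs, intervalIntegral.integral_of_le hs]
  rw [show (fun n : ℕ => ∫ r in Set.Ioc (0:ℝ) s, g n r) = fun n => Hn H (n+1) s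
    from funext h1] at hkey
  have h2 : (∫ r in Set.Ioc (0:ℝ) s, SS H r * H r) = ∫ r in (0:ℝ)..s, SS H r * H r :=
    (intervalIntegral.integral_of_le hs).symm
  have h3 : SS H s = 1 + ∑' n : ℕ, Hn H (n+1) s := by
    rw [SS, Summable.tsum_eq_zero_add (summable_Hn H hH s)]
    rfl
  rw [h3, hkey.tsum_eq, h2]


/-- for a continuous `H` with values in a unital Banach algebra, the
time-ordered exponential series `A(t) = 1 + Σ_{n≥1} H_n(t)` converges absolutely for
every `t ≥ 0`, satisfies `A(0) = 1`, and is differentiable on `[0,∞)` with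
`A'(t) = A(t)·H(t)`. -/
theorem timeOrderedExp_solves_evolution (H : ℝ → A) (hH : Continuous H) :
    (∀ t : ℝ, 0 ≤ t → Summable (fun n : ℕ => ‖Hn H n t‖)) ∧
    (∑' n : ℕ, Hn H n 0) = 1 ∧
    (∀ t : ℝ, 0 ≤ t →
      HasDerivWithinAt (fun s : ℝ => ∑' n : ℕ, Hn H n s)
        ((∑' n : ℕ, Hn H n t) * H t) (Set.Ici 0) t) := by
  refine ⟨fun t _ => summable_norm_Hn H hH t, ?_, ?_⟩
  · exact SS_zero_le H hH le_rfl
  · intro t ht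
    have hgc : Continuous (fun r => SS H r * H r) := (continuous_SS H hH).mul hH
    have hF : HasDerivAt (fun s => 1 + ∫ r in (0:ℝ)..s, SS H r * H r) (SS H t * H t) t :=
      ((hgc.integral_hasStrictDerivAt 0 t).hasDerivAt).const_add 1
    exact (hF.hasDerivWithinAt).congr (fun y hy => SS_integral_eq H hH hy)
      (SS_integral_eq H hH ht)
end

section
/- Let A be a Banach algebra with unit, H : ℝ → A continuous, t ≥ 0, and n_1, n_2 ≥ 1 with n = n_1 + n_2. Then the product of two iterated simplex integrals satisfies H_{n_1}(t)·H_{n_2}(t) = Σ_{σ ∈ S_n, Desc(σ) ⊆ {n_1}} H_σ(t); that is, H_{n_1} H_{n_2} = H_{D_{\{n_1\}}^{(n)}}. -/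
open MeasureTheory

variable {A : Type*} [NormedRing A] [NormedAlgebra ℝ A] [CompleteSpace A]

namespace HnAux
set_option linter.unusedSectionVars false

/-- ordered product of `H` along coordinates -/
noncomputable def G (H : ℝ → A) (n : ℕ) (w : Fin n → ℝ) : A :=
  (List.ofFn (fun j => H (w j))).prod

lemma continuous_G {H : ℝ → A} (hH : Continuous H) (n : ℕ) : Continuous (G H n) := by
  have : G H n = fun w => ((List.finRange n).map (fun j => H (w j))).prod := by
    funext w; rw [G, List.ofFn_eq_map]
  rw [this]
  exact continuous_list_prod _ (fun i _ => hH.comp (continuous_apply i))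

lemma isClosed_simplex (n : ℕ) (t : ℝ) : IsClosed (simplex n t) := by
  have : simplex n t =
      (⋂ i, ({u : Fin n → ℝ | 0 ≤ u i} ∩ {u | u i ≤ t})) ∩
        ⋂ (i) (j), {u : Fin n → ℝ | i ≤ j → u i ≤ u j} := by
    ext u
    simp only [simplex, Set.mem_setOf_eq, Set.mem_inter_iff, Set.mem_iInter, Set.mem_setOf_eq,
      Set.mem_inter_iff]
  rw [this]
  refine IsClosed.inter (isClosed_iInter fun i => IsClosed.inter ?_ ?_)
      (isClosed_iInter fun i => isClosed_iInter fun j => ?_)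
  · exact isClosed_le continuous_const (continuous_apply i)
  · exact isClosed_le (continuous_apply i) continuous_const
  · by_cases h : i ≤ j
    · have : {u : Fin n → ℝ | i ≤ j → u i ≤ u j} = {u | u i ≤ u j} := by
        ext u; simp [h]
      rw [this]
      exact isClosed_le (continuous_apply i) (continuous_apply j)
    · have : {u : Fin n → ℝ | i ≤ j → u i ≤ u j} = Set.univ := by
        ext u; simp [h]
      rw [this]; exact isClosed_univ

lemma simplex_subset_Icc (n : ℕ) (t : ℝ) :
    simplex n t ⊆ Set.Icc 0 (fun _ => t) := by
  intro u hu
  exact ⟨fun i => (hu.1 i).1, fun i => (hu.1 i).2⟩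

lemma integrableOn_G {H : ℝ → A} (hH : Continuous H) (n : ℕ) (t : ℝ)
    {s : Set (Fin n → ℝ)} (hs : s ⊆ Set.Icc 0 (fun _ => t)) :
    IntegrableOn (G H n) s := by
  exact ((continuous_G hH n).continuousOn.integrableOn_compact isCompact_Icc).mono_set hs


section Comb

variable {n₁ n₂ : ℕ} (t : ℝ)

/-- coordinates permuted by `σ⁻¹` land in the simplex -/
def Tset (σ : Equiv.Perm (Fin (n₁ + n₂))) : Set (Fin (n₁ + n₂) → ℝ) :=
  {w | w ∘ ⇑σ⁻¹ ∈ simplex (n₁ + n₂) t}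

/-- increasing on each of the two blocks, values in `[0,t]` -/
def Tprod : Set (Fin (n₁ + n₂) → ℝ) :=
  {w | (∀ i, 0 ≤ w i ∧ w i ≤ t) ∧
    (∀ i j : Fin (n₁ + n₂), i ≤ j → (j : ℕ) < n₁ → w i ≤ w j) ∧
    (∀ i j : Fin (n₁ + n₂), i ≤ j → n₁ ≤ (i : ℕ) → w i ≤ w j)}

variable {σ : Equiv.Perm (Fin (n₁ + n₂))}

lemma mem_descSet {n : ℕ} {σ : Equiv.Perm (Fin n)} {i : ℕ} (hn : i < n) :
    i ∈ descSet σ ↔ 0 < i ∧ σ ⟨i, hn⟩ < σ ⟨i - 1, lt_of_le_of_lt (Nat.sub_le i 1) hn⟩ := by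
  rw [descSet, Finset.mem_filter, Finset.mem_Ioo]
  constructor
  · rintro ⟨⟨h0, -⟩, h2, hd⟩; exact ⟨h0, hd⟩
  · rintro ⟨h0, hd⟩; exact ⟨⟨h0, hn⟩, hn, hd⟩

lemma adj_of_desc (hσ : descSet σ ⊆ {n₁}) {i : ℕ} (h0 : 0 < i) (hn : i < n₁ + n₂)
    (hne : i ≠ n₁) :
    σ ⟨i - 1, lt_of_le_of_lt (Nat.sub_le i 1) hn⟩ < σ ⟨i, hn⟩ := by
  by_contra hlt
  push_neg at hlt
  have hne2 : (⟨i, hn⟩ : Fin (n₁ + n₂)) ≠ ⟨i - 1, lt_of_le_of_lt (Nat.sub_le i 1) hn⟩ := by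
    simp only [ne_eq, Fin.mk.injEq]; omega
  have hlt2 : σ ⟨i, hn⟩ < σ ⟨i - 1, lt_of_le_of_lt (Nat.sub_le i 1) hn⟩ :=
    lt_of_le_of_ne hlt (fun h => hne2 (σ.injective h))
  have hmem : i ∈ descSet σ := (mem_descSet hn).mpr ⟨h0, hlt2⟩
  have := Finset.mem_singleton.mp (hσ hmem)
  exact hne this

lemma blockMono (hσ : descSet σ ⊆ {n₁}) :
    ∀ (a b : Fin (n₁ + n₂)), a ≤ b → ((b : ℕ) < n₁ ∨ n₁ ≤ (a : ℕ)) → σ a ≤ σ b := by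
  intro a b hab hblk
  obtain ⟨d, hd⟩ : ∃ d, (b : ℕ) = (a : ℕ) + d := ⟨(b : ℕ) - (a : ℕ), by omega⟩
  clear hab
  induction d generalizing b with
  | zero =>
    have : a = b := Fin.ext (by omega)
    subst this; exact le_rfl
  | succ d ih =>
    have hb' : (a : ℕ) + d < n₁ + n₂ := lt_of_le_of_lt (by omega) b.isLt
    set b' : Fin (n₁ + n₂) := ⟨(a : ℕ) + d, hb'⟩ with hb'def
    have h1 : σ a ≤ σ b' := by
      refine ih b' ?_ rfl
      rcases hblk with h | h
      · exact Or.inl (by simp [hb'def]; omega)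
      · exact Or.inr h
    have hbne : (b : ℕ) ≠ n₁ := by
      rcases hblk with h | h
      · omega
      · omega
    have h0 : 0 < (b : ℕ) := by omega
    have h2 : σ ⟨(b : ℕ) - 1, lt_of_le_of_lt (Nat.sub_le _ 1) b.isLt⟩ < σ ⟨(b : ℕ), b.isLt⟩ :=
      adj_of_desc hσ h0 b.isLt hbne
    have e1 : (⟨(b : ℕ) - 1, lt_of_le_of_lt (Nat.sub_le _ 1) b.isLt⟩ : Fin (n₁ + n₂)) = b' :=
      Fin.ext (by simp [hb'def]; omega)
    have e2 : (⟨(b : ℕ), b.isLt⟩ : Fin (n₁ + n₂)) = b := Fin.ext rfl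
    rw [e1, e2] at h2
    exact h1.trans h2.le

lemma Tset_subset (hσ : descSet σ ⊆ {n₁}) : Tset t σ ⊆ Tprod t := by
  intro w hw
  obtain ⟨hb, hm⟩ := hw
  have hco : ∀ i : Fin (n₁ + n₂), (w ∘ ⇑σ⁻¹) (σ i) = w i := by
    intro i; simp
  refine ⟨fun i => by rw [← hco i]; exact hb (σ i), ?_, ?_⟩
  · intro i j hij hj
    have := hm (σ i) (σ j) (blockMono hσ i j hij (Or.inl hj))
    rwa [hco, hco] at this
  · intro i j hij hi
    have := hm (σ i) (σ j) (blockMono hσ i j hij (Or.inr hi))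
    rwa [hco, hco] at this

lemma exists_mem_Tset {w : Fin (n₁ + n₂) → ℝ} (hw : w ∈ Tprod t)
    (hinj : Function.Injective w) :
    ∃ σ : Equiv.Perm (Fin (n₁ + n₂)), descSet σ ⊆ {n₁} ∧ w ∈ Tset t σ := by
  set τ := Tuple.sort w with hτ
  refine ⟨τ⁻¹, ?_, ?_⟩
  · -- descent condition
    intro i hi
    have hn : i < n₁ + n₂ := Finset.mem_Ioo.mp (Finset.mem_of_mem_filter i hi) |>.2
    rw [mem_descSet hn] at hi
    obtain ⟨h0, hdesc⟩ := hi
    rw [Finset.mem_singleton]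
    by_contra hne
    -- positions i-1 and i are in the same block
    have hmono : Monotone (w ∘ ⇑τ) := Tuple.monotone_sort w
    have hsm : StrictMono (w ∘ ⇑τ) :=
      hmono.strictMono_of_injective (hinj.comp τ.injective)
    have hwi : w ⟨i - 1, lt_of_le_of_lt (Nat.sub_le i 1) hn⟩ < w ⟨i, hn⟩ := by
      have hle : (⟨i - 1, lt_of_le_of_lt (Nat.sub_le i 1) hn⟩ : Fin (n₁ + n₂)) ≤ ⟨i, hn⟩ := by
        simp only [Fin.mk_le_mk]; omega
      have hne2 : (⟨i - 1, lt_of_le_of_lt (Nat.sub_le i 1) hn⟩ : Fin (n₁ + n₂)) ≠ ⟨i, hn⟩ := by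
        simp only [ne_eq, Fin.mk.injEq]; omega
      refine lt_of_le_of_ne ?_ (fun h => hne2 (hinj h))
      rcases lt_or_ge i n₁ with h | h
      · exact hw.2.1 _ _ hle (by simpa using h)
      · exact hw.2.2 _ _ hle (by simp; omega)
    -- rewrite via the strictly monotone sorted tuple
    have key : ∀ x : Fin (n₁ + n₂), (w ∘ ⇑τ) (τ⁻¹ x) = w x := by
      intro x; simp
    have h1 : (w ∘ ⇑τ) (τ⁻¹ ⟨i - 1, lt_of_le_of_lt (Nat.sub_le i 1) hn⟩) <
        (w ∘ ⇑τ) (τ⁻¹ ⟨i, hn⟩) := by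
      rw [key, key]; exact hwi
    have h2 : τ⁻¹ ⟨i - 1, lt_of_le_of_lt (Nat.sub_le i 1) hn⟩ < τ⁻¹ ⟨i, hn⟩ :=
      hsm.lt_iff_lt.mp h1
    exact absurd hdesc (not_lt.mpr h2.le)
  · -- membership in Tset
    show w ∘ ⇑(τ⁻¹)⁻¹ ∈ simplex (n₁ + n₂) t
    rw [inv_inv]
    refine ⟨fun i => hw.1 (τ i), fun i j hij => Tuple.monotone_sort w hij⟩

lemma eq_of_mem_Tset {w : Fin (n₁ + n₂) → ℝ} (hinj : Function.Injective w)
    {σ τ : Equiv.Perm (Fin (n₁ + n₂))} (hσ : w ∈ Tset t σ) (hτ : w ∈ Tset t τ) :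
    σ = τ := by
  have hmσ : Monotone (w ∘ ⇑σ⁻¹) := fun i j hij => hσ.2 i j hij
  have hmτ : Monotone (w ∘ ⇑τ⁻¹) := fun i j hij => hτ.2 i j hij
  have := Tuple.unique_monotone hmσ hmτ
  have hinv : σ⁻¹ = τ⁻¹ := by
    ext x
    exact congrArg Fin.val (hinj (congrFun this x))
  exact inv_injective hinv

lemma measurableSet_Tset (σ : Equiv.Perm (Fin (n₁ + n₂))) : MeasurableSet (Tset t σ) := by
  have hc : Continuous (fun w : Fin (n₁ + n₂) → ℝ => w ∘ ⇑σ⁻¹) :=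
    continuous_pi fun i => continuous_apply _
  exact ((isClosed_simplex _ t).preimage hc).measurableSet

lemma Tset_subset_Icc (σ : Equiv.Perm (Fin (n₁ + n₂))) :
    Tset t σ ⊆ Set.Icc 0 (fun _ => t) := by
  intro w hw
  constructor
  · intro k
    have := (hw.1 (σ k)).1
    simpa using this
  · intro k
    have := (hw.1 (σ k)).2
    simpa using this

lemma Tprod_subset_Icc : Tprod (n₁ := n₁) (n₂ := n₂) t ⊆ Set.Icc 0 (fun _ => t) :=
  fun w hw => ⟨fun i => (hw.1 i).1, fun i => (hw.1 i).2⟩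

end Comb

section NullSet

/-- The set of non-injective tuples is Lebesgue-null. -/
lemma volume_nonInj (n : ℕ) :
    volume {w : Fin n → ℝ | ¬ Function.Injective w} = 0 := by
  have hsub : {w : Fin n → ℝ | ¬ Function.Injective w} ⊆
      ⋃ (i : Fin n), ⋃ (j : Fin n), ⋃ (_ : i ≠ j), {w : Fin n → ℝ | w i = w j} := by
    intro w hw
    simp only [Function.Injective, not_forall] at hw
    obtain ⟨i, j, hij, hne⟩ := hw
    exact Set.mem_iUnion.mpr ⟨i, Set.mem_iUnion.mpr ⟨j, Set.mem_iUnion.mpr ⟨hne, hij⟩⟩⟩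
  refine measure_mono_null hsub ?_
  refine measure_iUnion_null fun i => measure_iUnion_null fun j => measure_iUnion_null fun hij => ?_
  have hker : {w : Fin n → ℝ | w i = w j} =
      (LinearMap.ker ((LinearMap.proj i : (Fin n → ℝ) →ₗ[ℝ] ℝ) - LinearMap.proj j) :
        Submodule ℝ (Fin n → ℝ)) := by
    ext w
    simp [LinearMap.mem_ker, sub_eq_zero]
  rw [hker]
  refine Measure.addHaar_submodule _ _ ?_
  intro htop
  have hmem : (Pi.single i 1 : Fin n → ℝ) ∈
      LinearMap.ker ((LinearMap.proj i : (Fin n → ℝ) →ₗ[ℝ] ℝ) - LinearMap.proj j) := by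
    rw [htop]; trivial
  rw [LinearMap.mem_ker] at hmem
  simp only [LinearMap.sub_apply, LinearMap.proj_apply] at hmem
  rw [Pi.single_eq_same, Pi.single_eq_of_ne (Ne.symm hij)] at hmem
  norm_num at hmem

end NullSet

section ChangeVar

variable {n₁ n₂ : ℕ} (t : ℝ) {H : ℝ → A}

/-- change of variables: `Hperm` as an integral of `G` over `Tset`. -/
lemma Hperm_eq (H : ℝ → A) (σ : Equiv.Perm (Fin (n₁ + n₂))) :
    Hperm H σ t = ∫ w in Tset t σ, G H (n₁ + n₂) w := by
  set E : (Fin (n₁ + n₂) → ℝ) ≃ᵐ (Fin (n₁ + n₂) → ℝ) :=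
    MeasurableEquiv.arrowCongr' (σ.symm : Fin (n₁ + n₂) ≃ Fin (n₁ + n₂))
      (MeasurableEquiv.refl ℝ) with hE
  have hmp : MeasurePreserving E volume volume :=
    MeasureTheory.volume_preserving_arrowCongr' _ _ (MeasurePreserving.id _)
  have hset : ⇑E ⁻¹' Tset t σ = simplex (n₁ + n₂) t := by
    ext u
    have : (⇑E u) ∘ ⇑σ⁻¹ = u := by
      funext k
      show u (σ (σ⁻¹ k)) = u k
      exact congrArg u (σ.apply_symm_apply k)
    simp only [Set.mem_preimage, Tset, Set.mem_setOf_eq, this]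
  have := hmp.setIntegral_preimage_emb E.measurableEmbedding (G H (n₁ + n₂)) (Tset t σ)
  rw [hset] at this
  rw [← this, Hperm]
  rfl

/-- The descent-sum equals the integral over `Tprod`. -/
lemma sum_Hperm_eq {H : ℝ → A} (hH : Continuous H) (t : ℝ) (n₁ n₂ : ℕ) :
    ∑ σ ∈ Finset.univ.filter
        (fun σ : Equiv.Perm (Fin (n₁ + n₂)) => descSet σ ⊆ {n₁}),
      Hperm H σ t = ∫ w in Tprod (n₁ := n₁) (n₂ := n₂) t, G H (n₁ + n₂) w := by
  classical
  set n := n₁ + n₂ with hn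
  set D : Set (Fin (n₁ + n₂) → ℝ) := {w | Function.Injective w} with hD
  have hDc : volume Dᶜ = 0 := by
    have : Dᶜ = {w : Fin (n₁ + n₂) → ℝ | ¬ Function.Injective w} := by
      ext w; simp [hD]
    rw [this]; exact volume_nonInj _
  have hDm : MeasurableSet D := by
    have : D = ⋂ (i) (j) (_ : i ≠ j), {w : Fin (n₁ + n₂) → ℝ | w i = w j}ᶜ := by
      ext w
      simp only [Set.mem_iInter, Set.mem_compl_iff, Set.mem_setOf_eq, hD]
      constructor
      · intro h i j hij hc; exact hij (h hc)
      · intro h a b hab; by_contra hne; exact h a b hne hab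
    rw [this]
    exact MeasurableSet.iInter fun i => MeasurableSet.iInter fun j =>
      MeasurableSet.iInter fun _ =>
        (isClosed_eq (continuous_apply i) (continuous_apply j)).measurableSet.compl
  have hae : ∀ s : Set (Fin (n₁ + n₂) → ℝ), (s ∩ D : Set _) =ᵐ[volume] s := by
    intro s
    rw [MeasureTheory.ae_eq_set]
    constructor
    · rw [Set.diff_eq_empty.mpr Set.inter_subset_left]; exact measure_empty
    · exact measure_mono_null (fun w hw => fun hDw => hw.2 ⟨hw.1, hDw⟩) hDc
  set F := Finset.univ.filter
      (fun σ : Equiv.Perm (Fin (n₁ + n₂)) => descSet σ ⊆ {n₁}) with hF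
  calc ∑ σ ∈ F, Hperm H σ t
      = ∑ σ ∈ F, ∫ w in Tset t σ ∩ D, G H (n₁ + n₂) w := by
        refine Finset.sum_congr rfl fun σ _ => ?_
        rw [Hperm_eq, setIntegral_congr_set (hae (Tset t σ)).symm]
    _ = ∫ w in ⋃ σ ∈ F, (Tset t σ ∩ D), G H (n₁ + n₂) w := by
        rw [integral_biUnion_finset F (fun σ _ => (measurableSet_Tset t σ).inter hDm)
          ?_ (fun σ _ => integrableOn_G hH _ t
            ((Set.inter_subset_left).trans (Tset_subset_Icc t σ)))]
        intro σ _ τ _ hne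
        show Disjoint (Tset t σ ∩ D) (Tset t τ ∩ D)
        rw [Set.disjoint_left]
        intro w hwσ hwτ
        exact hne (eq_of_mem_Tset t hwσ.2 hwσ.1 hwτ.1)
    _ = ∫ w in Tprod (n₁ := n₁) (n₂ := n₂) t ∩ D, G H (n₁ + n₂) w := by
        have hset : (⋃ σ ∈ F, (Tset t σ ∩ D)) = Tprod (n₁ := n₁) (n₂ := n₂) t ∩ D := by
          ext w
          simp only [Set.mem_iUnion, Set.mem_inter_iff, exists_prop]
          constructor
          · rintro ⟨σ, hσF, hwσ, hwD⟩
            exact ⟨Tset_subset t (Finset.mem_filter.mp hσF).2 hwσ, hwD⟩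
          · rintro ⟨hwT, hwD⟩
            obtain ⟨σ, hσ, hwσ⟩ := exists_mem_Tset t hwT hwD
            exact ⟨σ, Finset.mem_filter.mpr ⟨Finset.mem_univ _, hσ⟩, hwσ, hwD⟩
        rw [hset]
    _ = ∫ w in Tprod (n₁ := n₁) (n₂ := n₂) t, G H (n₁ + n₂) w :=
        setIntegral_congr_set (hae _)

end ChangeVar

section ProdSide

variable {n₁ n₂ : ℕ}

/-- glue a pair of tuples into one tuple of length `n₁ + n₂`, measurably. -/
noncomputable def Phi (n₁ n₂ : ℕ) : ((Fin n₁ → ℝ) × (Fin n₂ → ℝ)) ≃ᵐ (Fin (n₁ + n₂) → ℝ) :=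
  (MeasurableEquiv.sumPiEquivProdPi (fun _ : Fin n₁ ⊕ Fin n₂ => ℝ)).symm.trans
    (MeasurableEquiv.arrowCongr' finSumFinEquiv (MeasurableEquiv.refl ℝ))

lemma measurePreserving_Phi :
    MeasurePreserving (Phi n₁ n₂) volume volume :=
  (MeasureTheory.volume_preserving_arrowCongr' _ _ (MeasurePreserving.id _)).comp
    (MeasureTheory.volume_measurePreserving_sumPiEquivProdPi_symm _)

lemma Phi_castAdd (u : Fin n₁ → ℝ) (v : Fin n₂ → ℝ) (j : Fin n₁) :
    Phi n₁ n₂ (u, v) (Fin.castAdd n₂ j) = u j := by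
  show Sum.elim u v (finSumFinEquiv.symm (Fin.castAdd n₂ j)) = u j
  rw [finSumFinEquiv_symm_apply_castAdd]
  rfl

lemma Phi_natAdd (u : Fin n₁ → ℝ) (v : Fin n₂ → ℝ) (j : Fin n₂) :
    Phi n₁ n₂ (u, v) (Fin.natAdd n₁ j) = v j := by
  show Sum.elim u v (finSumFinEquiv.symm (Fin.natAdd n₁ j)) = v j
  rw [finSumFinEquiv_symm_apply_natAdd]
  rfl

lemma fin_cases_add (k : Fin (n₁ + n₂)) :
    (∃ j : Fin n₁, k = Fin.castAdd n₂ j) ∨ ∃ j : Fin n₂, k = Fin.natAdd n₁ j := by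
  rcases lt_or_ge (k : ℕ) n₁ with h | h
  · exact Or.inl ⟨⟨k, h⟩, Fin.ext rfl⟩
  · refine Or.inr ⟨⟨(k : ℕ) - n₁, by have := k.isLt; omega⟩, Fin.ext ?_⟩
    show (k : ℕ) = n₁ + ((k : ℕ) - n₁)
    omega

lemma Phi_preimage_Tprod (t : ℝ) :
    ⇑(Phi n₁ n₂) ⁻¹' Tprod (n₁ := n₁) (n₂ := n₂) t = simplex n₁ t ×ˢ simplex n₂ t := by
  ext ⟨u, v⟩
  simp only [Set.mem_preimage, Set.mem_prod]
  constructor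
  · rintro ⟨hb, hm₁, hm₂⟩
    refine ⟨⟨fun j => ?_, fun i j hij => ?_⟩, ⟨fun j => ?_, fun i j hij => ?_⟩⟩
    · rw [← Phi_castAdd u v j]; exact hb _
    · have h := hm₁ (Fin.castAdd n₂ i) (Fin.castAdd n₂ j) (by simp only [Fin.le_def, Fin.coe_castAdd]; exact hij) (by simpa using j.isLt)
      rwa [Phi_castAdd, Phi_castAdd] at h
    · rw [← Phi_natAdd u v j]; exact hb _
    · have h := hm₂ (Fin.natAdd n₁ i) (Fin.natAdd n₁ j)
        (by rw [Fin.le_def]; simp only [Fin.coe_natAdd]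
            exact Nat.add_le_add_left (Fin.le_def.mp hij) n₁) (by simp)
      rwa [Phi_natAdd, Phi_natAdd] at h
  · rintro ⟨⟨hb₁, hm₁⟩, hb₂, hm₂⟩
    refine ⟨fun k => ?_, fun i j hij hj => ?_, fun i j hij hi => ?_⟩
    · rcases fin_cases_add k with ⟨j, rfl⟩ | ⟨j, rfl⟩
      · rw [Phi_castAdd]; exact hb₁ j
      · rw [Phi_natAdd]; exact hb₂ j
    · -- both i and j lie in the first block
      have hi : (i : ℕ) < n₁ := lt_of_le_of_lt hij hj
      have ei : i = Fin.castAdd n₂ ⟨(i : ℕ), hi⟩ := Fin.ext rfl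
      have ej : j = Fin.castAdd n₂ ⟨(j : ℕ), hj⟩ := Fin.ext rfl
      rw [ei, ej, Phi_castAdd, Phi_castAdd]
      exact hm₁ _ _ hij
    · have hj : n₁ ≤ (j : ℕ) := le_trans hi hij
      have hi' : (i : ℕ) - n₁ < n₂ := by have := i.isLt; omega
      have hj' : (j : ℕ) - n₁ < n₂ := by have := j.isLt; omega
      have ei : i = Fin.natAdd n₁ ⟨(i : ℕ) - n₁, hi'⟩ :=
        Fin.ext (by simp only [Fin.coe_natAdd]; omega)
      have ej : j = Fin.natAdd n₁ ⟨(j : ℕ) - n₁, hj'⟩ :=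
        Fin.ext (by simp only [Fin.coe_natAdd]; omega)
      rw [ei, ej, Phi_natAdd, Phi_natAdd]
      refine hm₂ _ _ ?_
      rw [Fin.mk_le_mk]
      have : (i : ℕ) ≤ (j : ℕ) := hij
      omega

lemma G_Phi (H : ℝ → A) (u : Fin n₁ → ℝ) (v : Fin n₂ → ℝ) :
    G H (n₁ + n₂) (Phi n₁ n₂ (u, v)) = G H n₁ u * G H n₂ v := by
  rw [G, List.ofFn_add, List.prod_append, G, G]
  simp only [Phi_castAdd, Phi_natAdd]
  congr 1; congr 1; congr 1; funext i; exact congrArg H (Phi_castAdd u v i)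

lemma Hn_eq_integral (H : ℝ → A) (t : ℝ) {k : ℕ} (hk : 1 ≤ k) :
    Hn H k t = ∫ u in simplex k t, G H k u := by
  obtain ⟨m, rfl⟩ := Nat.exists_eq_add_of_lt (Nat.lt_of_lt_of_le Nat.zero_lt_one hk)
  rfl

lemma Hn_mul_eq {H : ℝ → A} (hH : Continuous H) (t : ℝ) (h₁ : 1 ≤ n₁) (h₂ : 1 ≤ n₂) :
    Hn H n₁ t * Hn H n₂ t = ∫ w in Tprod (n₁ := n₁) (n₂ := n₂) t, G H (n₁ + n₂) w := by
  rw [Hn_eq_integral H t h₁, Hn_eq_integral H t h₂]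
  have h2 : ∫ w in Tprod (n₁ := n₁) (n₂ := n₂) t, G H (n₁ + n₂) w
      = ∫ p in simplex n₁ t ×ˢ simplex n₂ t, G H (n₁ + n₂) (Phi n₁ n₂ p) := by
    rw [← Phi_preimage_Tprod t]
    exact (measurePreserving_Phi.setIntegral_preimage_emb
      (Phi n₁ n₂).measurableEmbedding _ _).symm
  rw [h2]
  have h3 : ∀ p : (Fin n₁ → ℝ) × (Fin n₂ → ℝ),
      G H (n₁ + n₂) (Phi n₁ n₂ p) = G H n₁ p.1 * G H n₂ p.2 := fun p => G_Phi H p.1 p.2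
  simp_rw [h3]
  have hint : IntegrableOn (fun p : (Fin n₁ → ℝ) × (Fin n₂ → ℝ) => G H n₁ p.1 * G H n₂ p.2)
      (simplex n₁ t ×ˢ simplex n₂ t) (volume.prod volume) := by
    have hc : Continuous (fun p : (Fin n₁ → ℝ) × (Fin n₂ → ℝ) => G H n₁ p.1 * G H n₂ p.2) :=
      ((continuous_G hH n₁).comp continuous_fst).mul ((continuous_G hH n₂).comp continuous_snd)
    have hK : IsCompact ((Set.Icc 0 (fun _ => t) : Set (Fin n₁ → ℝ)) ×ˢ
        (Set.Icc 0 (fun _ => t) : Set (Fin n₂ → ℝ))) := isCompact_Icc.prod isCompact_Icc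
    refine (hc.continuousOn.integrableOn_compact hK).mono_set ?_
    exact Set.prod_mono (simplex_subset_Icc n₁ t) (simplex_subset_Icc n₂ t)
  rw [Measure.volume_eq_prod, setIntegral_prod _ hint]
  have inner : ∀ u : Fin n₁ → ℝ,
      ∫ v in simplex n₂ t, G H n₁ u * G H n₂ v = G H n₁ u * ∫ v in simplex n₂ t, G H n₂ v := by
    intro u
    exact ContinuousLinearMap.integral_comp_comm (ContinuousLinearMap.mul ℝ A (G H n₁ u))
      (integrableOn_G hH n₂ t (simplex_subset_Icc n₂ t))
  simp_rw [inner]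
  exact (ContinuousLinearMap.integral_comp_comm
    ((ContinuousLinearMap.mul ℝ A).flip (∫ v in simplex n₂ t, G H n₂ v))
    (integrableOn_G hH n₁ t (simplex_subset_Icc n₁ t))).symm

end ProdSide

end HnAux


/-- `H_{n₁}(t)·H_{n₂}(t) = Σ_{σ ∈ S_n, Desc(σ) ⊆ {n₁}} H_σ(t)`,
i.e. `H_{n₁} H_{n₂} = H_{D_{{n₁}}^{(n)}}` with `n = n₁ + n₂`. -/
theorem Hn_mul_Hn (H : ℝ → A) (hH : Continuous H) (t : ℝ) (ht : 0 ≤ t)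
    (n₁ n₂ : ℕ) (h₁ : 1 ≤ n₁) (h₂ : 1 ≤ n₂) :
    Hn H n₁ t * Hn H n₂ t =
      ∑ σ ∈ Finset.univ.filter
          (fun σ : Equiv.Perm (Fin (n₁ + n₂)) => descSet σ ⊆ {n₁}),
        Hperm H σ t := by
  rw [HnAux.Hn_mul_eq hH t h₁ h₂, ← HnAux.sum_Hperm_eq hH t n₁ n₂]
end

section
/- Let A be a Banach algebra with unit, H : ℝ → A continuous, t ≥ 0, and n_1, …, n_k ≥ 1 with n = n_1 + ⋯ + n_k. Then the product of k iterated simplex integrals satisfies H_{n_1}(t)·H_{n_2}(t)⋯H_{n_k}(t) = Σ_{σ ∈ S_n, Desc(σ) ⊆ {n_1, n_1+n_2, …, n_1+⋯+n_{k−1}}} H_σ(t); that is, H_{n_1} H_{n_2} ⋯ H_{n_k} = H_{D_{\{n_1, n_1+n_2, …, n_1+⋯+n_{k−1}\}}^{(n)}}. -/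
open MeasureTheory

variable {A : Type*} [NormedRing A] [NormedAlgebra ℝ A] [CompleteSpace A]

set_option linter.unusedSectionVars false
set_option linter.unusedVariables false

-- auxiliary defs
noncomputable def Fprod (H : ℝ → A) (n : ℕ) : (Fin n → ℝ) → A :=
  fun v => (List.ofFn (fun j => H (v j))).prod

def Tset {n : ℕ} (σ : Equiv.Perm (Fin n)) (t : ℝ) : Set (Fin n → ℝ) :=
  {v | (∀ i, 0 ≤ v i ∧ v i ≤ t) ∧ Monotone (v ∘ ⇑σ⁻¹)}

def Rset (n : ℕ) (S : Finset ℕ) (t : ℝ) : Set (Fin n → ℝ) :=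
  {v | (∀ i, 0 ≤ v i ∧ v i ≤ t) ∧
    ∀ (i : ℕ) (h : i + 1 < n), (i + 1) ∉ S → v ⟨i, by omega⟩ ≤ v ⟨i + 1, h⟩}

def bset (l : List ℕ) : Finset ℕ :=
  (Finset.Ico 1 l.length).image (fun j => (l.take j).sum)

lemma isClosed_bounds (n : ℕ) (t : ℝ) :
    IsClosed {v : Fin n → ℝ | ∀ i, 0 ≤ v i ∧ v i ≤ t} := by
  have h : {v : Fin n → ℝ | ∀ i, 0 ≤ v i ∧ v i ≤ t} =
      ⋂ i, ({v : Fin n → ℝ | 0 ≤ v i} ∩ {v | v i ≤ t}) := by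
    ext v; simp [Set.mem_iInter, forall_and]
  rw [h]
  exact isClosed_iInter fun i =>
    ((isClosed_le continuous_const (continuous_apply i)).inter
      (isClosed_le (continuous_apply i) continuous_const))

lemma isClosed_Tset {n : ℕ} (σ : Equiv.Perm (Fin n)) (t : ℝ) : IsClosed (Tset σ t) := by
  have h : Tset σ t = {v : Fin n → ℝ | ∀ i, 0 ≤ v i ∧ v i ≤ t} ∩
      ⋂ (p : Fin n × Fin n) (_ : p.1 ≤ p.2), {v : Fin n → ℝ | v (σ⁻¹ p.1) ≤ v (σ⁻¹ p.2)} := by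
    ext v
    simp only [Tset, Set.mem_setOf_eq, Set.mem_inter_iff, Set.mem_iInter]
    constructor
    · rintro ⟨h1, h2⟩; exact ⟨h1, fun p hp => h2 hp⟩
    · rintro ⟨h1, h2⟩; exact ⟨h1, fun a b hab => h2 (a, b) hab⟩
  rw [h]
  exact (isClosed_bounds n t).inter <| isClosed_iInter fun p => isClosed_iInter fun _ =>
    isClosed_le (continuous_apply _) (continuous_apply _)

lemma isClosed_Rset (n : ℕ) (S : Finset ℕ) (t : ℝ) : IsClosed (Rset n S t) := by
  have h : Rset n S t = {v : Fin n → ℝ | ∀ i, 0 ≤ v i ∧ v i ≤ t} ∩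
      ⋂ (i : ℕ) (h : i + 1 < n) (_ : (i + 1) ∉ S),
        {v : Fin n → ℝ | v ⟨i, by omega⟩ ≤ v ⟨i + 1, h⟩} := by
    ext v
    simp only [Rset, Set.mem_setOf_eq, Set.mem_inter_iff, Set.mem_iInter]
  rw [h]
  exact (isClosed_bounds n t).inter <| isClosed_iInter fun i => isClosed_iInter fun h =>
    isClosed_iInter fun _ => isClosed_le (continuous_apply _) (continuous_apply _)

lemma continuous_Fprod {H : ℝ → A} (hH : Continuous H) (n : ℕ) : Continuous (Fprod H n) := by
  unfold Fprod
  simp only [List.ofFn_eq_map]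
  exact continuous_list_prod _ (fun i _ => hH.comp (continuous_apply i))

lemma integrableOn_Fprod {H : ℝ → A} (hH : Continuous H) {n : ℕ} {t : ℝ}
    {s : Set (Fin n → ℝ)} (hs : MeasurableSet s)
    (hsub : s ⊆ {v | ∀ i, 0 ≤ v i ∧ v i ≤ t}) :
    IntegrableOn (Fprod H n) s := by
  have hcube : IsCompact {v : Fin n → ℝ | ∀ i, 0 ≤ v i ∧ v i ≤ t} := by
    have h : {v : Fin n → ℝ | ∀ i, 0 ≤ v i ∧ v i ≤ t} =
        Set.univ.pi (fun _ => Set.Icc 0 t) := by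
      ext v
      constructor
      · intro hv i _; exact Set.mem_Icc.2 (hv i)
      · intro hv i; exact Set.mem_Icc.1 (hv i (Set.mem_univ i))
    rw [h]; exact isCompact_univ_pi fun _ => isCompact_Icc
  exact ((continuous_Fprod hH n).locallyIntegrable.integrableOn_isCompact hcube).mono_set hsub

lemma Hperm_eq_Tset (H : ℝ → A) {n : ℕ} (σ : Equiv.Perm (Fin n)) (t : ℝ) :
    Hperm H σ t = ∫ v in Tset σ t, Fprod H n v := by
  set e := MeasurableEquiv.arrowCongr' (σ⁻¹ : Fin n ≃ Fin n) (MeasurableEquiv.refl ℝ) with he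
  have hmp : MeasurePreserving e := volume_preserving_arrowCongr' _ _ (MeasurePreserving.id _)
  have happ : ∀ u : Fin n → ℝ, e u = u ∘ ⇑σ := by
    intro u; funext j
    simp [he, MeasurableEquiv.arrowCongr', Equiv.arrowCongr', Equiv.Perm.inv_def]
  have key := hmp.setIntegral_preimage_emb e.measurableEmbedding (Fprod H n) (Tset σ t)
  have hpre : (⇑e) ⁻¹' (Tset σ t) = simplex n t := by
    ext u
    simp only [Set.mem_preimage, happ, Tset, simplex, Set.mem_setOf_eq]
    constructor
    · rintro ⟨h1, h2⟩
      have hcomp : (u ∘ ⇑σ) ∘ ⇑σ⁻¹ = u := by funext x; simp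
      rw [hcomp] at h2
      refine ⟨fun i => by simpa using h1 (σ⁻¹ i), fun i j hij => h2 hij⟩
    · rintro ⟨h1, h2⟩
      have hcomp : (u ∘ ⇑σ) ∘ ⇑σ⁻¹ = u := by funext x; simp
      refine ⟨fun i => h1 (σ i), by rw [hcomp]; exact fun i j hij => h2 i j hij⟩
  rw [Hperm, ← hpre]
  rw [← key]
  apply integral_congr_ae
  filter_upwards with u
  rw [happ u]
  rfl

lemma Hn_eq_setIntegral (H : ℝ → A) (m : ℕ) (t : ℝ) :
    Hn H m t = ∫ v in simplex m t, Fprod H m v := by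
  cases m with
  | zero =>
    have h1 : simplex 0 t = Set.univ := by
      ext v
      refine ⟨fun _ => Set.mem_univ v, fun _ => ⟨fun i => i.elim0, fun i => i.elim0⟩⟩
    rw [h1, Measure.restrict_univ]
    rw [MeasureTheory.integral_unique]
    have h2 : (volume (Set.univ : Set (Fin 0 → ℝ))).toReal = 1 := by
      rw [MeasureTheory.volume_pi, MeasureTheory.Measure.pi_univ]; simp
    rw [measureReal_def, h2, one_smul]
    show (1 : A) = _
    simp [Fprod]
  | succ k => rfl

lemma simplex_eq_Rset (m : ℕ) (t : ℝ) : simplex m t = Rset m ∅ t := by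
  ext v
  simp only [simplex, Rset, Set.mem_setOf_eq, Finset.notMem_empty, not_false_iff]
  constructor
  · rintro ⟨h1, h2⟩
    exact ⟨h1, fun i h _ => h2 ⟨i, by omega⟩ ⟨i + 1, h⟩ (by simp [Fin.mk_le_mk])⟩
  · rintro ⟨h1, h2⟩
    refine ⟨h1, ?_⟩
    cases m with
    | zero => exact fun i => i.elim0
    | succ k =>
      have hmono : Monotone v := Fin.monotone_iff_le_succ.2 fun i =>
        h2 i.val (by omega) trivial
      exact fun i j hij => hmono hij

lemma Tset_unique {n : ℕ} {t : ℝ} {v : Fin n → ℝ} (hv : Function.Injective v)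
    {σ τ : Equiv.Perm (Fin n)} (hσ : v ∈ Tset σ t) (hτ : v ∈ Tset τ t) : σ = τ := by
  have hgσ : StrictMono (v ∘ ⇑σ⁻¹) :=
    hσ.2.strictMono_of_injective (hv.comp (Equiv.injective _))
  have hgτ : StrictMono (v ∘ ⇑τ⁻¹) :=
    hτ.2.strictMono_of_injective (hv.comp (Equiv.injective _))
  have hφ : StrictMono (fun i => σ (τ⁻¹ i)) := by
    intro i j hij
    have h1 : (v ∘ ⇑σ⁻¹) (σ (τ⁻¹ i)) = (v ∘ ⇑τ⁻¹) i := by simp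
    have h2 : (v ∘ ⇑σ⁻¹) (σ (τ⁻¹ j)) = (v ∘ ⇑τ⁻¹) j := by simp
    rw [← hgσ.lt_iff_lt, h1, h2]
    exact hgτ hij
  have hid : (fun i => σ (τ⁻¹ i)) = id := by
    have : WellFoundedLT (Fin n) := inferInstance
    refine (hφ.range_inj strictMono_id).1 ?_
    rw [Set.range_id]
    exact Set.range_eq_univ.2 (σ.surjective.comp τ⁻¹.surjective)
  ext x
  have h := congrFun hid (τ x)
  simp only [Equiv.Perm.inv_def, Equiv.symm_apply_apply, id_eq] at h
  exact congrArg Fin.val h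

lemma mem_Rset_iff {n : ℕ} {t : ℝ} {S : Finset ℕ} {v : Fin n → ℝ}
    (hv : Function.Injective v) {σ : Equiv.Perm (Fin n)} (hσ : v ∈ Tset σ t) :
    v ∈ Rset n S t ↔ descSet σ ⊆ S := by
  obtain ⟨hb, hm⟩ := hσ
  have hg : StrictMono (v ∘ ⇑σ⁻¹) :=
    hm.strictMono_of_injective (hv.comp (Equiv.injective _))
  have hle : ∀ i j : Fin n, v i ≤ v j ↔ σ i ≤ σ j := by
    intro i j
    have h1 : v i = (v ∘ ⇑σ⁻¹) (σ i) := by simp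
    have h2 : v j = (v ∘ ⇑σ⁻¹) (σ j) := by simp
    rw [h1, h2, hg.le_iff_le]
  constructor
  · rintro ⟨-, hR⟩ i hi
    simp only [descSet, Finset.mem_filter, Finset.mem_Ioo] at hi
    obtain ⟨⟨hi0, hin⟩, hlt', hdesc⟩ := hi
    by_contra hiS
    obtain ⟨k, rfl⟩ : ∃ k, i = k + 1 := ⟨i - 1, by omega⟩
    have hR' := hR k (by omega) hiS
    rw [hle] at hR'
    simp only [Nat.add_sub_cancel] at hdesc
    exact absurd hdesc (not_lt.2 hR')
  · intro hd
    refine ⟨hb, fun i h hiS => ?_⟩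
    have hnmem : (i + 1) ∉ descSet σ := fun hmem => hiS (hd hmem)
    simp only [descSet, Finset.mem_filter, Finset.mem_Ioo] at hnmem
    push_neg at hnmem
    have h2 := hnmem ⟨Nat.succ_pos i, h⟩ h
    simp only [Nat.add_sub_cancel] at h2
    rw [hle]
    exact h2

lemma union_Tset_eq {n : ℕ} {S : Finset ℕ} {t : ℝ} :
    Rset n S t ∩ {v : Fin n → ℝ | Function.Injective v} =
      ⋃ σ ∈ Finset.univ.filter (fun σ : Equiv.Perm (Fin n) => descSet σ ⊆ S),
        (Tset σ t ∩ {v : Fin n → ℝ | Function.Injective v}) := by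
  ext v
  simp only [Set.mem_inter_iff, Set.mem_iUnion, Set.mem_setOf_eq, Finset.mem_filter,
    Finset.mem_univ, true_and, exists_prop]
  constructor
  · rintro ⟨hR, hinj⟩
    have hT : v ∈ Tset (Tuple.sort v)⁻¹ t :=
      ⟨hR.1, by rw [inv_inv]; exact Tuple.monotone_sort v⟩
    exact ⟨(Tuple.sort v)⁻¹, (mem_Rset_iff hinj hT).1 hR, hT, hinj⟩
  · rintro ⟨σ, hd, hT, hinj⟩
    exact ⟨(mem_Rset_iff hinj hT).2 hd, hinj⟩

lemma noninj_null (n : ℕ) :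
    volume {v : Fin n → ℝ | ¬ Function.Injective v} = 0 := by
  have hset : {v : Fin n → ℝ | ¬ Function.Injective v} =
      ⋃ (p : Fin n × Fin n) (_ : p.1 ≠ p.2), {v : Fin n → ℝ | v p.1 = v p.2} := by
    ext v
    simp only [Set.mem_setOf_eq, Set.mem_iUnion, Function.Injective]
    push_neg
    constructor
    · rintro ⟨a, b, hab, hne⟩; exact ⟨(a, b), hne, hab⟩
    · rintro ⟨p, hne, hab⟩; exact ⟨p.1, p.2, hab, hne⟩
  rw [hset]
  refine measure_iUnion_null fun p => ?_
  by_cases hp : p.1 = p.2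
  · simp [hp]
  · refine measure_mono_null (Set.iUnion_subset fun _ => subset_rfl) ?_
    have hker : {v : Fin n → ℝ | v p.1 = v p.2} =
        (LinearMap.ker ((LinearMap.proj p.1 : (Fin n → ℝ) →ₗ[ℝ] ℝ) - LinearMap.proj p.2) :
          Submodule ℝ (Fin n → ℝ)) := by
      ext v
      simp [LinearMap.mem_ker, sub_eq_zero]
    rw [hker]
    apply Measure.addHaar_submodule
    intro htop
    have h1 : (Pi.single p.1 (1 : ℝ) : Fin n → ℝ) ∈
        LinearMap.ker ((LinearMap.proj p.1 : (Fin n → ℝ) →ₗ[ℝ] ℝ) - LinearMap.proj p.2) := by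
      rw [htop]; trivial
    simp only [LinearMap.mem_ker, LinearMap.sub_apply, LinearMap.proj_apply] at h1
    rw [Pi.single_eq_same, Pi.single_eq_of_ne (Ne.symm hp)] at h1
    norm_num at h1

lemma measurableSet_inj (n : ℕ) :
    MeasurableSet {v : Fin n → ℝ | Function.Injective v} := by
  have hset : {v : Fin n → ℝ | ¬ Function.Injective v} =
      ⋃ (p : Fin n × Fin n) (_ : p.1 ≠ p.2), {v : Fin n → ℝ | v p.1 = v p.2} := by
    ext v
    simp only [Set.mem_setOf_eq, Set.mem_iUnion, Function.Injective]
    push_neg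
    constructor
    · rintro ⟨a, b, hab, hne⟩; exact ⟨(a, b), hne, hab⟩
    · rintro ⟨p, hne, hab⟩; exact ⟨p.1, p.2, hab, hne⟩
  have h1 : MeasurableSet {v : Fin n → ℝ | ¬ Function.Injective v} := by
    rw [hset]
    exact MeasurableSet.iUnion fun p => MeasurableSet.iUnion fun _ =>
      (isClosed_eq (continuous_apply p.1) (continuous_apply p.2)).measurableSet
  have h2 : {v : Fin n → ℝ | Function.Injective v} =
      {v : Fin n → ℝ | ¬ Function.Injective v}ᶜ := by
    ext v; simp
  rw [h2]
  exact h1.compl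

lemma setIntegral_Rset (H : ℝ → A) (hH : Continuous H) (n : ℕ) (S : Finset ℕ) (t : ℝ) :
    ∫ v in Rset n S t, Fprod H n v =
      ∑ σ ∈ Finset.univ.filter (fun σ : Equiv.Perm (Fin n) => descSet σ ⊆ S),
        ∫ v in Tset σ t, Fprod H n v := by
  set I := {v : Fin n → ℝ | Function.Injective v} with hI
  have hIc : volume Iᶜ = 0 := by
    have : Iᶜ = {v : Fin n → ℝ | ¬ Function.Injective v} := by ext v; simp [hI]
    rw [this]; exact noninj_null n
  have hae : ∀ s : Set (Fin n → ℝ), (s ∩ I : Set (Fin n → ℝ)) =ᵐ[volume] s := by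
    intro s
    rw [MeasureTheory.ae_eq_set]
    constructor
    · have : (s ∩ I) \ s = ∅ := by
        rw [Set.diff_eq_empty]; exact Set.inter_subset_left
      rw [this]; exact measure_empty
    · refine measure_mono_null ?_ hIc
      intro v hv hvI
      exact hv.2 ⟨hv.1, hvI⟩
  calc ∫ v in Rset n S t, Fprod H n v
      = ∫ v in Rset n S t ∩ I, Fprod H n v := (setIntegral_congr_set (hae _)).symm
    _ = ∫ v in ⋃ σ ∈ Finset.univ.filter
          (fun σ : Equiv.Perm (Fin n) => descSet σ ⊆ S), (Tset σ t ∩ I), Fprod H n v := by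
        rw [union_Tset_eq]
    _ = ∑ σ ∈ Finset.univ.filter (fun σ : Equiv.Perm (Fin n) => descSet σ ⊆ S),
          ∫ v in Tset σ t ∩ I, Fprod H n v := by
        apply integral_biUnion_finset
        · exact fun σ _ => (isClosed_Tset σ t).measurableSet.inter (measurableSet_inj n)
        · intro σ hσ τ hτ hne
          rw [Function.onFun, Set.disjoint_left]
          rintro v ⟨hTσ, hvI⟩ ⟨hTτ, -⟩
          exact hne (Tset_unique hvI hTσ hTτ)
        · intro σ _
          exact integrableOn_Fprod hH
            ((isClosed_Tset σ t).measurableSet.inter (measurableSet_inj n))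
            (fun v hv => hv.1.1)
    _ = ∑ σ ∈ Finset.univ.filter (fun σ : Equiv.Perm (Fin n) => descSet σ ⊆ S),
          ∫ v in Tset σ t, Fprod H n v :=
        Finset.sum_congr rfl fun σ _ => setIntegral_congr_set (hae _)

noncomputable def finSplit (a m : ℕ) : (Fin (a + m) → ℝ) ≃ᵐ (Fin a → ℝ) × (Fin m → ℝ) :=
  (MeasurableEquiv.piCongrLeft (fun _ => ℝ) finSumFinEquiv).symm.trans
    (MeasurableEquiv.sumPiEquivProdPi fun _ => ℝ)

lemma finSplit_measurePreserving (a m : ℕ) :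
    MeasurePreserving (finSplit a m) volume volume :=
  (volume_measurePreserving_sumPiEquivProdPi (fun _ : Fin a ⊕ Fin m => ℝ)).comp
    ((volume_measurePreserving_piCongrLeft (fun _ => ℝ) finSumFinEquiv).symm _)

lemma finSplit_apply (a m : ℕ) (v : Fin (a + m) → ℝ) :
    finSplit a m v = (fun i => v (Fin.castAdd m i), fun j => v (Fin.natAdd a j)) := by
  rfl

lemma setIntegral_prod_split (H : ℝ → A) (hH : Continuous H) (a m : ℕ) (t : ℝ)
    (s₁ : Set (Fin a → ℝ)) (s₂ : Set (Fin m → ℝ))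
    (h₁m : MeasurableSet s₁) (h₂m : MeasurableSet s₂)
    (h₁ : s₁ ⊆ {v | ∀ i, 0 ≤ v i ∧ v i ≤ t}) (h₂ : s₂ ⊆ {v | ∀ i, 0 ≤ v i ∧ v i ≤ t}) :
    ∫ v in (finSplit a m) ⁻¹' (s₁ ×ˢ s₂), Fprod H (a + m) v =
      (∫ x in s₁, Fprod H a x) * ∫ y in s₂, Fprod H m y := by
  have hint1 : IntegrableOn (Fprod H a) s₁ := integrableOn_Fprod hH h₁m h₁
  have hint2 : IntegrableOn (Fprod H m) s₂ := integrableOn_Fprod hH h₂m h₂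
  have hsplit : ∀ v : Fin (a + m) → ℝ, Fprod H (a + m) v =
      Fprod H a (fun i => v (Fin.castAdd m i)) * Fprod H m (fun j => v (Fin.natAdd a j)) := by
    intro v
    unfold Fprod
    rw [List.ofFn_add, List.prod_append]
    rfl
  have key := (finSplit_measurePreserving a m).setIntegral_preimage_emb
      (finSplit a m).measurableEmbedding
      (fun p => Fprod H a p.1 * Fprod H m p.2) (s₁ ×ˢ s₂)
  have step1 : ∫ v in (finSplit a m) ⁻¹' (s₁ ×ˢ s₂), Fprod H (a + m) v =
      ∫ p in s₁ ×ˢ s₂, Fprod H a p.1 * Fprod H m p.2 := by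
    rw [← key]
    apply integral_congr_ae
    filter_upwards with v
    rw [finSplit_apply]
    exact hsplit v
  rw [step1]
  rw [show (volume : Measure ((Fin a → ℝ) × (Fin m → ℝ))) = volume.prod volume from rfl,
    ← Measure.prod_restrict]
  have hintprod : Integrable (fun p : (Fin a → ℝ) × (Fin m → ℝ) => Fprod H a p.1 * Fprod H m p.2)
      ((volume.restrict s₁).prod (volume.restrict s₂)) := by
    have hnorm : Integrable
        (fun p : (Fin a → ℝ) × (Fin m → ℝ) => ‖Fprod H a p.1‖ * ‖Fprod H m p.2‖)
        ((volume.restrict s₁).prod (volume.restrict s₂)) := hint1.norm.mul_prod hint2.norm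
    refine hnorm.mono' ?_ ?_
    · exact (hint1.aestronglyMeasurable.comp_fst).mul (hint2.aestronglyMeasurable.comp_snd)
    · filter_upwards with p
      exact norm_mul_le _ _
  rw [MeasureTheory.integral_prod _ hintprod]
  have inner : ∀ x, (∫ y, Fprod H a x * Fprod H m y ∂(volume.restrict s₂)) =
      Fprod H a x * ∫ y in s₂, Fprod H m y := by
    intro x
    have h := ContinuousLinearMap.integral_comp_comm
      (ContinuousLinearMap.mul ℝ A (Fprod H a x)) hint2
    simpa using h
  simp_rw [inner]
  have houter := ContinuousLinearMap.integral_comp_comm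
    ((ContinuousLinearMap.mul ℝ A).flip (∫ y in s₂, Fprod H m y)) hint1
  simpa using houter

lemma mem_bset_cons {a : ℕ} {l : List ℕ} {x : ℕ} :
    x ∈ bset (a :: l) ↔ ∃ k < l.length, x = a + (l.take k).sum := by
  simp only [bset, Finset.mem_image, Finset.mem_Ico, List.length_cons]
  constructor
  · rintro ⟨j, ⟨hj1, hj2⟩, rfl⟩
    obtain ⟨k, rfl⟩ : ∃ k, j = k + 1 := ⟨j - 1, by omega⟩
    exact ⟨k, by omega, by simp [List.take_succ_cons]⟩
  · rintro ⟨k, hk, rfl⟩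
    exact ⟨k + 1, ⟨by omega, by omega⟩, by simp [List.take_succ_cons]⟩

lemma Rset_cons_split {a : ℕ} {l : List ℕ} {m : ℕ} (hm : l.sum = m) (t : ℝ)
    (v : Fin (a + m) → ℝ) :
    v ∈ Rset (a + m) (bset (a :: l)) t ↔
      (fun i => v (Fin.castAdd m i)) ∈ Rset a ∅ t ∧
      (fun j => v (Fin.natAdd a j)) ∈ Rset m (bset l) t := by
  have hlt_not : ∀ x, x < a → x ∉ bset (a :: l) := by
    intro x hx hmem
    rw [mem_bset_cons] at hmem
    obtain ⟨k, -, rfl⟩ := hmem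
    omega
  have hgt : ∀ x, a < x → (x ∈ bset (a :: l) ↔ (x - a) ∈ bset l) := by
    intro x hx
    rw [mem_bset_cons]
    simp only [bset, Finset.mem_image, Finset.mem_Ico]
    constructor
    · rintro ⟨k, hk, rfl⟩
      have hk0 : k ≠ 0 := by rintro rfl; simp at hx
      exact ⟨k, ⟨by omega, hk⟩, by omega⟩
    · rintro ⟨k, ⟨hk1, hk2⟩, hkx⟩
      exact ⟨k, hk2, by omega⟩
  have ha_mem : 0 < l.length → a ∈ bset (a :: l) := fun h =>
    mem_bset_cons.2 ⟨0, h, by simp⟩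
  constructor
  · rintro ⟨hb, hc⟩
    refine ⟨⟨fun i => hb _, fun i h _ => ?_⟩, fun j => hb _, fun j h hj => ?_⟩
    · exact hc i (by omega) (hlt_not _ (by omega))
    · refine hc (a + j) (by omega) ?_
      intro hmem
      apply hj
      rw [← show a + j + 1 - a = j + 1 from by omega]
      exact ((hgt _ (by omega)).1 hmem)
  · rintro ⟨⟨hbL, hcL⟩, hbR, hcR⟩
    constructor
    · intro i
      rcases lt_or_ge (i : ℕ) a with hi | hi
      · exact hbL ⟨i, hi⟩
      · have hfix : Fin.natAdd a ⟨(i : ℕ) - a, by omega⟩ = i := by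
          apply Fin.ext; simp [Fin.coe_natAdd]; omega
        rw [← hfix]
        exact hbR _
    · intro i h hiS
      rcases lt_trichotomy (i + 1) a with h1 | h1 | h1
      · exact hcL i h1 (Finset.notMem_empty _)
      · exfalso
        have hl : 0 < l.length := by
          rcases l with - | ⟨b, l'⟩
          · simp at hm; omega
          · simp
        exact hiS (h1 ▸ ha_mem hl)
      · have hfix1 : Fin.natAdd a ⟨i - a, by omega⟩ = (⟨i, by omega⟩ : Fin (a + m)) := by
          apply Fin.ext; simp [Fin.coe_natAdd]; omega
        have hfix2 : Fin.natAdd a ⟨i - a + 1, by omega⟩ = (⟨i + 1, h⟩ : Fin (a + m)) := by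
          apply Fin.ext; simp [Fin.coe_natAdd]; omega
        have hnot : (i - a) + 1 ∉ bset l := by
          intro hmem
          apply hiS
          rw [hgt _ h1, show i + 1 - a = i - a + 1 from by omega]
          exact hmem
        have hres := hcR (i - a) (by omega) hnot
        rw [← hfix1, ← hfix2]
        exact hres

lemma prod_Hn_eq (H : ℝ → A) (hH : Continuous H) (t : ℝ) :
    ∀ (l : List ℕ) (n : ℕ), l.sum = n →
      (l.map (fun m => Hn H m t)).prod = ∫ v in Rset n (bset l) t, Fprod H n v := by
  intro l
  induction l with
  | nil =>
    intro n hn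
    simp only [List.sum_nil] at hn
    subst hn
    simp only [List.map_nil, List.prod_nil]
    have h0 : Rset 0 (bset []) t = Set.univ := by
      ext v
      exact ⟨fun _ => Set.mem_univ v, fun _ => ⟨fun i => i.elim0, fun i h => by omega⟩⟩
    rw [h0, Measure.restrict_univ, MeasureTheory.integral_unique]
    have h2 : (volume (Set.univ : Set (Fin 0 → ℝ))).toReal = 1 := by
      rw [MeasureTheory.volume_pi, MeasureTheory.Measure.pi_univ]; simp
    rw [measureReal_def, h2, one_smul]
    show (1 : A) = _
    simp [Fprod]
  | cons a l ih =>
    intro n hn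
    simp only [List.sum_cons] at hn
    subst hn
    set m := l.sum with hm
    simp only [List.map_cons, List.prod_cons]
    rw [ih m rfl, Hn_eq_setIntegral, simplex_eq_Rset]
    rw [← setIntegral_prod_split H hH a m t _ _ (isClosed_Rset a ∅ t).measurableSet
      (isClosed_Rset m (bset l) t).measurableSet (fun v hv => hv.1) (fun v hv => hv.1)]
    have hset : (finSplit a m) ⁻¹' (Rset a ∅ t ×ˢ Rset m (bset l) t)
        = Rset (a + m) (bset (a :: l)) t := by
      ext v
      rw [Set.mem_preimage, finSplit_apply, Set.mem_prod]
      exact (Rset_cons_split rfl t v).symm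
    rw [hset]


/-- for a composition `(n₁,…,n_k)` of `n` (all `n_j ≥ 1`),
`H_{n₁}(t)⋯H_{n_k}(t) = Σ_{σ ∈ S_n, Desc(σ) ⊆ {n₁, n₁+n₂, …, n₁+⋯+n_{k−1}}} H_σ(t)`. -/
theorem Hn_prod_eq_sum_descents (H : ℝ → A) (hH : Continuous H) (t : ℝ) (ht : 0 ≤ t)
    (n : ℕ) (hn : 1 ≤ n) (c : Composition n) :
    (List.ofFn (fun i : Fin c.length => Hn H (c.blocksFun i) t)).prod =
      ∑ σ ∈ Finset.univ.filter
          (fun σ : Equiv.Perm (Fin n) =>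
            descSet σ ⊆ (Finset.Ico 1 c.length).image c.sizeUpTo),
        Hperm H σ t := by
  have h1 : (List.ofFn (fun i : Fin c.length => Hn H (c.blocksFun i) t)) =
      c.blocks.map (fun m => Hn H m t) := by
    conv_rhs => rw [← List.ofFn_get c.blocks, List.map_ofFn]
    rfl
  have h2 : bset c.blocks = (Finset.Ico 1 c.length).image c.sizeUpTo := rfl
  rw [h1, prod_Hn_eq H hH t c.blocks n c.blocks_sum, setIntegral_Rset H hH n (bset c.blocks) t,
    h2]
  exact Finset.sum_congr rfl fun σ _ => (Hperm_eq_Tset H σ t).symm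
end

section
/- Let A be a Banach algebra with unit, H : ℝ → A continuous, t ≥ 0, n_1, n_2 ≥ 1, S_1 ⊆ {1,…,n_1−1} and S_2 ⊆ {1,…,n_2−1}. Then H_{D_{S_1}^{(n_1)}}(t) · H_{D_{S_2}^{(n_2)}}(t) = H_{D_{S_1 ∪ \{n_1\} ∪ (S_2+n_1)}^{(n_1+n_2)}}(t), where S_2 + n_1 := {s + n_1 : s ∈ S_2}. -/
open MeasureTheory

variable {A : Type*} [NormedRing A] [NormedAlgebra ℝ A] [CompleteSpace A]

namespace HDaux

/-- The integrand `v ↦ H(v 0)⋯H(v (n-1))`. -/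
noncomputable def F (H : ℝ → A) (n : ℕ) (v : Fin n → ℝ) : A :=
  (List.ofFn (fun j => H (v j))).prod

lemma continuous_F (H : ℝ → A) (hH : Continuous H) (n : ℕ) : Continuous (F H n) := by
  induction n with
  | zero =>
    have : F H 0 = fun _ => (1 : A) := by funext v; simp [F]
    rw [this]; exact continuous_const
  | succ n ih =>
    have h1 : Continuous fun v : Fin (n + 1) → ℝ => F H n (fun j => v j.succ) :=
      ih.comp (continuous_pi fun j => continuous_apply j.succ)
    have : F H (n + 1) = fun v => H (v 0) * F H n (fun j => v j.succ) := by
      funext v; simp [F, List.ofFn_succ]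
    rw [this]
    exact (hH.comp (continuous_apply 0)).mul h1

/-- The set of tuples `v` increasing on the blocks determined by `S`. -/
def cset (S : Finset ℕ) (n : ℕ) (t : ℝ) : Set (Fin n → ℝ) :=
  {v | (∀ i, 0 ≤ v i ∧ v i ≤ t) ∧
    ∀ j i : Fin n, (i : ℕ) = (j : ℕ) + 1 → (i : ℕ) ∉ S → v j ≤ v i}

lemma isClosed_cset (S : Finset ℕ) (n : ℕ) (t : ℝ) : IsClosed (cset S n t) := by
  have h : cset S n t =
      (⋂ i : Fin n, {v : Fin n → ℝ | 0 ≤ v i} ∩ {v | v i ≤ t}) ∩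
      ⋂ (j : Fin n) (i : Fin n) (_ : (i : ℕ) = (j : ℕ) + 1) (_ : (i : ℕ) ∉ S),
        {v : Fin n → ℝ | v j ≤ v i} := by
    ext v
    simp only [cset, Set.mem_setOf_eq, Set.mem_inter_iff, Set.mem_iInter]
  rw [h]
  refine IsClosed.inter (isClosed_iInter fun i =>
    (isClosed_le continuous_const (continuous_apply i)).inter
      (isClosed_le (continuous_apply i) continuous_const)) ?_
  exact isClosed_iInter fun j => isClosed_iInter fun i => isClosed_iInter fun _ =>
    isClosed_iInter fun _ => isClosed_le (continuous_apply j) (continuous_apply i)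

lemma isClosed_simplex (n : ℕ) (t : ℝ) : IsClosed (simplex n t) := by
  have h : simplex n t =
      (⋂ i : Fin n, {v : Fin n → ℝ | 0 ≤ v i} ∩ {v | v i ≤ t}) ∩
      ⋂ (i : Fin n) (j : Fin n) (_ : i ≤ j), {v : Fin n → ℝ | v i ≤ v j} := by
    ext v
    simp only [simplex, Set.mem_setOf_eq, Set.mem_inter_iff, Set.mem_iInter]
  rw [h]
  refine IsClosed.inter (isClosed_iInter fun i =>
    (isClosed_le continuous_const (continuous_apply i)).inter
      (isClosed_le (continuous_apply i) continuous_const)) ?_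
  exact isClosed_iInter fun i => isClosed_iInter fun j => isClosed_iInter fun _ =>
    isClosed_le (continuous_apply i) (continuous_apply j)

lemma cset_subset_Icc (S : Finset ℕ) (n : ℕ) (t : ℝ) :
    cset S n t ⊆ Set.Icc 0 (fun _ => t) :=
  fun v hv => ⟨fun i => (hv.1 i).1, fun i => (hv.1 i).2⟩

lemma integrableOn_F {H : ℝ → A} (hH : Continuous H) {n : ℕ} {t : ℝ}
    {s : Set (Fin n → ℝ)} (hsub : s ⊆ Set.Icc 0 (fun _ => t)) :
    IntegrableOn (F H n) s := by
  have h1 : IntegrableOn (F H n) (Set.Icc (0 : Fin n → ℝ) (fun _ => t)) :=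
    (continuous_F H hH n).continuousOn.integrableOn_compact isCompact_Icc
  exact h1.mono_set hsub

lemma measurableSet_inj (n : ℕ) :
    MeasurableSet {v : Fin n → ℝ | Function.Injective v} := by
  have h : {v : Fin n → ℝ | Function.Injective v} =
      ⋂ (i : Fin n) (j : Fin n) (_ : i ≠ j), {v : Fin n → ℝ | v i = v j}ᶜ := by
    ext v
    simp only [Set.mem_setOf_eq, Set.mem_iInter, Set.mem_compl_iff]
    constructor
    · intro h i j hij hv; exact hij (h hv)
    · intro h a b hab; by_contra hne; exact h a b hne hab
  rw [h]
  exact MeasurableSet.iInter fun i => MeasurableSet.iInter fun j => MeasurableSet.iInter fun _ =>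
    ((isClosed_eq (continuous_apply i) (continuous_apply j)).measurableSet).compl

lemma volume_noninj (n : ℕ) :
    volume {v : Fin n → ℝ | ¬ Function.Injective v} = 0 := by
  have hsub : {v : Fin n → ℝ | ¬ Function.Injective v} ⊆
      ⋃ (i : Fin n) (j : Fin n) (_ : i ≠ j), {v : Fin n → ℝ | v i = v j} := by
    intro v hv
    simp only [Set.mem_setOf_eq, Function.Injective] at hv
    push_neg at hv
    obtain ⟨i, j, hij, hne⟩ := hv
    exact Set.mem_iUnion.2 ⟨i, Set.mem_iUnion.2 ⟨j, Set.mem_iUnion.2 ⟨hne, hij⟩⟩⟩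
  refine measure_mono_null hsub (measure_iUnion_null fun i => measure_iUnion_null fun j =>
    measure_iUnion_null fun hij => ?_)
  set φ : (Fin n → ℝ) →ₗ[ℝ] ℝ := (LinearMap.proj i : (Fin n → ℝ) →ₗ[ℝ] ℝ) - (LinearMap.proj j : (Fin n → ℝ) →ₗ[ℝ] ℝ) with hφ
  have h : {v : Fin n → ℝ | v i = v j} = (LinearMap.ker φ : Submodule ℝ (Fin n → ℝ)) := by
    ext v
    simp [hφ, LinearMap.mem_ker, sub_eq_zero]
  rw [h]
  refine Measure.addHaar_submodule _ _ (fun htop => ?_)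
  have h1 : φ (Pi.single i (1 : ℝ)) = 0 :=
    LinearMap.mem_ker.1 (htop.symm ▸ Submodule.mem_top)
  simp only [hφ, LinearMap.sub_apply, LinearMap.proj_apply, Pi.single_eq_same,
    Pi.single_eq_of_ne (Ne.symm hij)] at h1
  norm_num at h1

lemma ae_eq_inter_inj {n : ℕ} (s : Set (Fin n → ℝ)) :
    (s ∩ {v : Fin n → ℝ | Function.Injective v} : Set (Fin n → ℝ)) =ᵐ[volume] s := by
  rw [MeasureTheory.ae_eq_set]
  constructor
  · refine measure_mono_null (t := (∅ : Set (Fin n → ℝ))) ?_ (by simp)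
    intro v hv
    exact absurd hv.1.1 hv.2
  · refine measure_mono_null (t := {v : Fin n → ℝ | ¬ Function.Injective v}) ?_ (volume_noninj n)
    intro v hv hinj
    exact hv.2 ⟨hv.1, hinj⟩

/-- The region `{v : v ∘ σ⁻¹ ∈ Δ}`, i.e. the tuples sorted by `σ⁻¹`. -/
def rset {n : ℕ} (σ : Equiv.Perm (Fin n)) (t : ℝ) : Set (Fin n → ℝ) :=
  {v | (fun j => v (σ⁻¹ j)) ∈ simplex n t}

lemma coe_piCongrLeft_perm {n : ℕ} (σ : Equiv.Perm (Fin n)) :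
    ⇑(MeasurableEquiv.piCongrLeft (fun _ : Fin n => ℝ) (σ.symm : Fin n ≃ Fin n)) =
      fun v : Fin n → ℝ => v ∘ σ := by
  funext v
  funext i
  rw [MeasurableEquiv.coe_piCongrLeft]
  have key := Equiv.piCongrLeft_apply_apply (fun _ : Fin n => ℝ)
    (σ.symm : Fin n ≃ Fin n) v (σ i)
  rw [Equiv.symm_apply_apply] at key
  exact key

lemma measurePreserving_compPerm {n : ℕ} (σ : Equiv.Perm (Fin n)) :
    MeasurePreserving (fun v : Fin n → ℝ => v ∘ σ) volume volume := by
  have h := MeasureTheory.volume_measurePreserving_piCongrLeft (fun _ : Fin n => ℝ)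
    (σ.symm : Fin n ≃ Fin n)
  rwa [coe_piCongrLeft_perm] at h

lemma measurableEmbedding_compPerm {n : ℕ} (σ : Equiv.Perm (Fin n)) :
    MeasurableEmbedding (fun v : Fin n → ℝ => v ∘ σ) := by
  have h := (MeasurableEquiv.piCongrLeft (fun _ : Fin n => ℝ)
    (σ.symm : Fin n ≃ Fin n)).measurableEmbedding
  rwa [coe_piCongrLeft_perm] at h

lemma Hperm_eq (H : ℝ → A) {n : ℕ} (σ : Equiv.Perm (Fin n)) (t : ℝ) :
    Hperm H σ t = ∫ v in rset σ t, F H n v := by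
  have hset : simplex n t = (fun v : Fin n → ℝ => v ∘ σ) ⁻¹' (rset σ t) := by
    ext u
    simp only [rset, Set.mem_preimage, Set.mem_setOf_eq]
    have h : (fun j => (u ∘ σ) (σ⁻¹ j)) = u := by funext j; simp
    rw [h]
  have key := (measurePreserving_compPerm σ).setIntegral_preimage_emb
    (measurableEmbedding_compPerm σ) (F H n) (rset σ t)
  calc Hperm H σ t
      = ∫ u in (fun v : Fin n → ℝ => v ∘ σ) ⁻¹' (rset σ t), F H n (u ∘ σ) := by
        rw [← hset]; rfl
    _ = ∫ v in rset σ t, F H n v := key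

lemma rset_subset_Icc {n : ℕ} (σ : Equiv.Perm (Fin n)) (t : ℝ) :
    rset σ t ⊆ Set.Icc 0 (fun _ => t) := by
  intro v hv
  refine ⟨fun i => ?_, fun i => ?_⟩
  · simpa using (hv.1 (σ i)).1
  · simpa using (hv.1 (σ i)).2

lemma isClosed_rset {n : ℕ} (σ : Equiv.Perm (Fin n)) (t : ℝ) : IsClosed (rset σ t) := by
  have h : rset σ t = (fun v : Fin n → ℝ => fun j => v (σ⁻¹ j)) ⁻¹' simplex n t := rfl
  rw [h]
  exact (isClosed_simplex n t).preimage (continuous_pi fun j => continuous_apply (σ⁻¹ j))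

lemma rset_subset_cset {n : ℕ} {σ : Equiv.Perm (Fin n)} {S : Finset ℕ} {t : ℝ}
    (hσ : descSet σ ⊆ S) : rset σ t ⊆ cset S n t := by
  intro v hv
  refine ⟨fun i => by simpa using hv.1 (σ i), fun j i hij hiS => ?_⟩
  have hnot : ¬ σ i < σ j := by
    intro hlt
    apply hiS
    apply hσ
    refine Finset.mem_filter.2 ⟨Finset.mem_Ioo.2 ⟨by omega, i.isLt⟩, i.isLt, ?_⟩
    have e1 : (⟨(i : ℕ), i.isLt⟩ : Fin n) = i := rfl
    have e2 : (⟨(i : ℕ) - 1, lt_of_le_of_lt (Nat.sub_le _ 1) i.isLt⟩ : Fin n) = j :=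
      Fin.ext (show (i : ℕ) - 1 = (j : ℕ) by omega)
    rw [e1, e2]
    exact hlt
  have hle : σ j ≤ σ i := le_of_not_gt hnot
  have h2 := hv.2 (σ j) (σ i) hle
  simpa using h2

lemma cover {S : Finset ℕ} {n : ℕ} {t : ℝ} (v : Fin n → ℝ)
    (hv : v ∈ cset S n t) (hinj : Function.Injective v) :
    ∃ σ : Equiv.Perm (Fin n), descSet σ ⊆ S ∧ v ∈ rset σ t := by
  set π := Tuple.sort v with hπ
  have hmono : Monotone (v ∘ π) := Tuple.monotone_sort v
  have hsm : StrictMono (v ∘ π) := hmono.strictMono_of_injective (hinj.comp π.injective)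
  refine ⟨π⁻¹, ?_, ?_, ?_⟩
  · intro i hi
    simp only [descSet, Finset.mem_filter, Finset.mem_Ioo] at hi
    obtain ⟨⟨hi0, hin⟩, h, hlt⟩ := hi
    by_contra hiS
    have hle : v ⟨i - 1, by omega⟩ ≤ v ⟨i, h⟩ :=
      hv.2 ⟨i - 1, by omega⟩ ⟨i, h⟩ (show i = i - 1 + 1 by omega) hiS
    have hne : v ⟨i - 1, by omega⟩ ≠ v ⟨i, h⟩ := by
      intro he
      have h3 := hinj he
      simp only [Fin.mk.injEq] at h3
      omega
    have hvlt : v ⟨i - 1, by omega⟩ < v ⟨i, h⟩ := lt_of_le_of_ne hle hne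
    have h1 : (v ∘ π) (π⁻¹ ⟨i - 1, by omega⟩) < (v ∘ π) (π⁻¹ ⟨i, h⟩) := by
      simpa using hvlt
    have h2 := hsm.lt_iff_lt.1 h1
    exact lt_asymm h2 hlt
  · intro j
    simp only [inv_inv]
    exact hv.1 (π j)
  · intro a b hab
    simp only [inv_inv]
    exact hmono hab

lemma rset_disj {n : ℕ} {t : ℝ} {σ τ : Equiv.Perm (Fin n)} (hστ : σ ≠ τ) (v : Fin n → ℝ)
    (hσ : v ∈ rset σ t) (hτ : v ∈ rset τ t) (hinj : Function.Injective v) : False := by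
  have hm1 : Monotone (fun j => v (σ⁻¹ j)) := fun a b hab => hσ.2 a b hab
  have hm2 : Monotone (fun j => v (τ⁻¹ j)) := fun a b hab => hτ.2 a b hab
  have hs1 : StrictMono (fun j => v (σ⁻¹ j)) :=
    hm1.strictMono_of_injective (hinj.comp (σ⁻¹).injective)
  have hs2 : StrictMono (fun j => v (τ⁻¹ j)) :=
    hm2.strictMono_of_injective (hinj.comp (τ⁻¹).injective)
  have hr : Set.range (fun j => v (σ⁻¹ j)) = Set.range (fun j => v (τ⁻¹ j)) := by
    have h1 : Set.range (fun j => v (σ⁻¹ j)) = Set.range v := (σ⁻¹).surjective.range_comp v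
    have h2 : Set.range (fun j => v (τ⁻¹ j)) = Set.range v := (τ⁻¹).surjective.range_comp v
    rw [h1, h2]
  have heq : (fun j => v (σ⁻¹ j)) = (fun j => v (τ⁻¹ j)) := by
    have hwf : WellFoundedLT (Fin n) := inferInstance
    have hri := @StrictMono.range_inj (Fin n) ℝ _ _ hwf _ _ hs1 hs2
    exact hri.1 hr
  apply hστ
  have h3 : σ⁻¹ = τ⁻¹ := Equiv.ext fun j => hinj (congrFun heq j)
  exact inv_injective h3

lemma sum_Hperm_eq (H : ℝ → A) (hH : Continuous H) (S : Finset ℕ) (n : ℕ) (t : ℝ) :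
    ∑ σ ∈ Finset.univ.filter (fun σ : Equiv.Perm (Fin n) => descSet σ ⊆ S), Hperm H σ t
      = ∫ v in cset S n t, F H n v := by
  classical
  set I := {v : Fin n → ℝ | Function.Injective v} with hI
  set filt := Finset.univ.filter (fun σ : Equiv.Perm (Fin n) => descSet σ ⊆ S) with hfilt
  have step1 : ∀ σ : Equiv.Perm (Fin n), Hperm H σ t = ∫ v in rset σ t ∩ I, F H n v := by
    intro σ
    rw [Hperm_eq H σ t]
    exact (setIntegral_congr_set (ae_eq_inter_inj _)).symm
  rw [Finset.sum_congr rfl (fun σ _ => step1 σ)]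
  have hmeas : ∀ σ ∈ filt, MeasurableSet (rset σ t ∩ I) :=
    fun σ _ => ((isClosed_rset σ t).measurableSet).inter (measurableSet_inj n)
  have hdisj : Set.Pairwise ↑filt (Function.onFun Disjoint (fun σ => rset σ t ∩ I)) := by
    intro σ _ τ _ hne
    rw [Function.onFun, Set.disjoint_left]
    intro v hvσ hvτ
    exact rset_disj hne v hvσ.1 hvτ.1 hvσ.2
  have hint : ∀ σ ∈ filt, IntegrableOn (F H n) (rset σ t ∩ I) := by
    intro σ _
    exact integrableOn_F hH ((Set.inter_subset_left).trans (rset_subset_Icc σ t))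
  rw [← MeasureTheory.integral_biUnion_finset filt hmeas hdisj hint]
  have hunion : (⋃ σ ∈ filt, rset σ t ∩ I) = cset S n t ∩ I := by
    ext v
    simp only [Set.mem_iUnion, Set.mem_inter_iff, hfilt, Finset.mem_filter, Finset.mem_univ,
      true_and]
    constructor
    · rintro ⟨σ, hσ, hvr, hvI⟩
      exact ⟨rset_subset_cset hσ hvr, hvI⟩
    · rintro ⟨hvc, hvI⟩
      obtain ⟨σ, hσS, hvr⟩ := cover v hvc hvI
      exact ⟨σ, hσS, hvr, hvI⟩
  rw [hunion]
  exact setIntegral_congr_set (ae_eq_inter_inj _)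

end HDaux

open HDaux in
/-- `H_{D_{S₁}^{(n₁)}}(t) · H_{D_{S₂}^{(n₂)}}(t)
= H_{D_{S₁ ∪ {n₁} ∪ (S₂+n₁)}^{(n₁+n₂)}}(t)`. -/
theorem HD_mul_HD (H : ℝ → A) (hH : Continuous H) (t : ℝ) (ht : 0 ≤ t)
    (n₁ n₂ : ℕ) (h₁ : 1 ≤ n₁) (h₂ : 1 ≤ n₂)
    (S₁ S₂ : Finset ℕ) (hS₁ : S₁ ⊆ Finset.Icc 1 (n₁ - 1)) (hS₂ : S₂ ⊆ Finset.Icc 1 (n₂ - 1)) :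
    (∑ σ ∈ Finset.univ.filter
        (fun σ : Equiv.Perm (Fin n₁) => descSet σ ⊆ S₁), Hperm H σ t) *
      (∑ τ ∈ Finset.univ.filter
        (fun τ : Equiv.Perm (Fin n₂) => descSet τ ⊆ S₂), Hperm H τ t) =
      ∑ ρ ∈ Finset.univ.filter
          (fun ρ : Equiv.Perm (Fin (n₁ + n₂)) =>
            descSet ρ ⊆ S₁ ∪ {n₁} ∪ S₂.image (· + n₁)),
        Hperm H ρ t := by
  classical
  rw [sum_Hperm_eq H hH S₁ n₁ t, sum_Hperm_eq H hH S₂ n₂ t,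
    sum_Hperm_eq H hH (S₁ ∪ {n₁} ∪ S₂.image (· + n₁)) (n₁ + n₂) t]
  set S' : Finset ℕ := S₁ ∪ {n₁} ∪ S₂.image (· + n₁) with hS'def
  -- membership helpers
  have helper1 : ∀ m : ℕ, m < n₁ → (m ∈ S' ↔ m ∈ S₁) := by
    intro m hm
    simp only [hS'def, Finset.mem_union, Finset.mem_singleton, Finset.mem_image]
    constructor
    · rintro ((h | h) | ⟨s, hs, hsm⟩)
      · exact h
      · omega
      · omega
    · intro h; exact Or.inl (Or.inl h)
  have helper2 : n₁ ∈ S' := by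
    simp [hS'def]
  have helper3 : ∀ m : ℕ, n₁ < m → (m ∈ S' ↔ (m - n₁) ∈ S₂) := by
    intro m hm
    simp only [hS'def, Finset.mem_union, Finset.mem_singleton, Finset.mem_image]
    constructor
    · rintro ((h | h) | ⟨s, hs, hsm⟩)
      · have := Finset.mem_Icc.1 (hS₁ h); omega
      · omega
      · have : s = m - n₁ := by omega
        rwa [← this]
    · intro h
      exact Or.inr ⟨m - n₁, h, by omega⟩
  -- the measure-preserving splitting map
  set Ψ : (Fin n₁ → ℝ) × (Fin n₂ → ℝ) → (Fin (n₁ + n₂) → ℝ) :=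
    fun p => (MeasurableEquiv.piCongrLeft (fun _ : Fin (n₁ + n₂) => ℝ) finSumFinEquiv)
      ((MeasurableEquiv.sumPiEquivProdPi (fun _ : Fin n₁ ⊕ Fin n₂ => ℝ)).symm p) with hΨdef
  have hΨ : MeasurePreserving Ψ (volume.prod volume) volume := by
    have hmp1 := MeasureTheory.volume_measurePreserving_piCongrLeft
      (fun _ : Fin (n₁ + n₂) => ℝ) finSumFinEquiv
    have hmp2 := (MeasureTheory.volume_measurePreserving_sumPiEquivProdPi
      (fun _ : Fin n₁ ⊕ Fin n₂ => ℝ)).symm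
      (MeasurableEquiv.sumPiEquivProdPi (fun _ : Fin n₁ ⊕ Fin n₂ => ℝ))
    have := hmp1.comp hmp2
    have hveq : (volume : Measure ((Fin n₁ → ℝ) × (Fin n₂ → ℝ))) = volume.prod volume :=
      MeasureTheory.Measure.volume_eq_prod _ _
    rw [hveq] at this
    exact this
  have hΨemb : MeasurableEmbedding Ψ :=
    ((MeasurableEquiv.piCongrLeft (fun _ : Fin (n₁ + n₂) => ℝ)
      finSumFinEquiv).measurableEmbedding).comp
      ((MeasurableEquiv.sumPiEquivProdPi
        (fun _ : Fin n₁ ⊕ Fin n₂ => ℝ)).symm.measurableEmbedding)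
  have hΨl : ∀ (u : Fin n₁ → ℝ) (w : Fin n₂ → ℝ) (i : Fin n₁),
      Ψ (u, w) (Fin.castAdd n₂ i) = u i := by
    intro u w i
    have h2 := Equiv.piCongrLeft_sumInl (fun _ : Fin (n₁ + n₂) => ℝ) finSumFinEquiv u w i
    rw [finSumFinEquiv_apply_left] at h2
    simpa [hΨdef, MeasurableEquiv.coe_piCongrLeft,
      MeasurableEquiv.coe_sumPiEquivProdPi_symm] using h2
  have hΨr : ∀ (u : Fin n₁ → ℝ) (w : Fin n₂ → ℝ) (j : Fin n₂),
      Ψ (u, w) (Fin.natAdd n₁ j) = w j := by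
    intro u w j
    have h2 := Equiv.piCongrLeft_sumInr (fun _ : Fin (n₁ + n₂) => ℝ) finSumFinEquiv u w j
    rw [finSumFinEquiv_apply_right] at h2
    simpa [hΨdef, MeasurableEquiv.coe_piCongrLeft,
      MeasurableEquiv.coe_sumPiEquivProdPi_symm] using h2
  have hF : ∀ (u : Fin n₁ → ℝ) (w : Fin n₂ → ℝ),
      F H (n₁ + n₂) (Ψ (u, w)) = F H n₁ u * F H n₂ w := by
    intro u w
    simp only [F, List.ofFn_add, List.prod_append, hΨl, hΨr]
    exact congrArg (· * _) (congrArg List.prod (congrArg List.ofFn (funext fun i => congrArg H (hΨl u w i))))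
  -- the set correspondence
  have hset : Ψ ⁻¹' (cset S' (n₁ + n₂) t) = (cset S₁ n₁ t) ×ˢ (cset S₂ n₂ t) := by
    ext ⟨u, w⟩
    simp only [Set.mem_preimage, Set.mem_prod]
    constructor
    · rintro ⟨hb, hmono⟩
      refine ⟨⟨fun i => ?_, fun j i hij hiS => ?_⟩, fun i => ?_, fun j i hij hiS => ?_⟩
      · have := hb (Fin.castAdd n₂ i); rwa [hΨl] at this
      · have h1 := hmono (Fin.castAdd n₂ j) (Fin.castAdd n₂ i)
          (by simpa using hij)
          (by simp only [Fin.coe_castAdd]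
              intro hmem
              exact hiS ((helper1 (i : ℕ) i.isLt).1 hmem))
        rwa [hΨl, hΨl] at h1
      · have := hb (Fin.natAdd n₁ i); rwa [hΨr] at this
      · have h1 := hmono (Fin.natAdd n₁ j) (Fin.natAdd n₁ i)
          (by simp only [Fin.coe_natAdd]; omega)
          (by simp only [Fin.coe_natAdd]
              intro hmem
              have h3 := (helper3 (n₁ + (i : ℕ)) (by omega)).1 hmem
              have h4 : n₁ + (i : ℕ) - n₁ = (i : ℕ) := by omega
              rw [h4] at h3
              exact hiS h3)
        rwa [hΨr, hΨr] at h1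
    · rintro ⟨⟨hub, hum⟩, ⟨hwb, hwm⟩⟩
      refine ⟨fun k => ?_, fun j i hij hiS => ?_⟩
      · rcases lt_or_ge (k : ℕ) n₁ with hk | hk
        · have hkk : k = Fin.castAdd n₂ ⟨(k : ℕ), hk⟩ := Fin.ext rfl
          rw [hkk, hΨl]; exact hub _
        · have hk2 : (k : ℕ) - n₁ < n₂ := by omega
          have hkk : k = Fin.natAdd n₁ ⟨(k : ℕ) - n₁, hk2⟩ := Fin.ext (by
            simp only [Fin.coe_natAdd]; omega)
          rw [hkk, hΨr]; exact hwb _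
      · rcases lt_trichotomy ((i : ℕ)) n₁ with hi | hi | hi
        · have hj : (j : ℕ) < n₁ := by omega
          have hii : i = Fin.castAdd n₂ ⟨(i : ℕ), hi⟩ := Fin.ext rfl
          have hjj : j = Fin.castAdd n₂ ⟨(j : ℕ), hj⟩ := Fin.ext rfl
          rw [hii, hjj, hΨl, hΨl]
          refine hum _ _ (by simpa using hij) ?_
          intro hmem
          exact hiS ((helper1 (i : ℕ) hi).2 hmem)
        · exact absurd (show (i : ℕ) ∈ S' by rw [hi]; exact helper2) hiS
        · have hj : n₁ ≤ (j : ℕ) := by omega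
          have hi2 : (i : ℕ) - n₁ < n₂ := by omega
          have hj2 : (j : ℕ) - n₁ < n₂ := by omega
          have hii : i = Fin.natAdd n₁ ⟨(i : ℕ) - n₁, hi2⟩ := Fin.ext (by
            simp only [Fin.coe_natAdd]; omega)
          have hjj : j = Fin.natAdd n₁ ⟨(j : ℕ) - n₁, hj2⟩ := Fin.ext (by
            simp only [Fin.coe_natAdd]; omega)
          rw [hii, hjj, hΨr, hΨr]
          refine hwm _ _ (by simp only []; omega) ?_
          intro hmem
          apply hiS
          rw [helper3 (i : ℕ) hi]
          exact hmem
  -- integrability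
  have hintF : IntegrableOn (F H (n₁ + n₂)) (cset S' (n₁ + n₂) t) volume :=
    integrableOn_F hH (cset_subset_Icc S' (n₁ + n₂) t)
  have hint2 : IntegrableOn
      (fun p : (Fin n₁ → ℝ) × (Fin n₂ → ℝ) => F H n₁ p.1 * F H n₂ p.2)
      ((cset S₁ n₁ t) ×ˢ (cset S₂ n₂ t)) (volume.prod volume) := by
    have h := ((hΨ.restrict_preimage_emb hΨemb
      (cset S' (n₁ + n₂) t)).integrable_comp_emb hΨemb).2 hintF
    rw [hset] at h
    exact h.congr (Filter.Eventually.of_forall fun p => hF p.1 p.2)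
  have hgint : Integrable (F H n₂) (volume.restrict (cset S₂ n₂ t)) :=
    integrableOn_F hH (cset_subset_Icc S₂ n₂ t)
  have hfint : Integrable (F H n₁) (volume.restrict (cset S₁ n₁ t)) :=
    integrableOn_F hH (cset_subset_Icc S₁ n₁ t)
  symm
  calc ∫ v in cset S' (n₁ + n₂) t, F H (n₁ + n₂) v
      = ∫ p in Ψ ⁻¹' (cset S' (n₁ + n₂) t), F H (n₁ + n₂) (Ψ p) ∂(volume.prod volume) :=
        (hΨ.setIntegral_preimage_emb hΨemb _ _).symm
    _ = ∫ p in (cset S₁ n₁ t) ×ˢ (cset S₂ n₂ t),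
          F H n₁ p.1 * F H n₂ p.2 ∂(volume.prod volume) := by
        rw [hset]
        exact integral_congr_ae (Filter.Eventually.of_forall fun p => hF p.1 p.2)
    _ = ∫ u in cset S₁ n₁ t, ∫ w in cset S₂ n₂ t, F H n₁ u * F H n₂ w :=
        MeasureTheory.setIntegral_prod _ hint2
    _ = ∫ u in cset S₁ n₁ t, F H n₁ u * ∫ w in cset S₂ n₂ t, F H n₂ w := by
        refine integral_congr_ae (Filter.Eventually.of_forall fun u => ?_)
        have h := ContinuousLinearMap.integral_comp_comm
          (ContinuousLinearMap.mul ℝ A (F H n₁ u)) hgint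
        simpa [ContinuousLinearMap.mul_apply'] using h
    _ = (∫ u in cset S₁ n₁ t, F H n₁ u) * ∫ w in cset S₂ n₂ t, F H n₂ w := by
        have h := ContinuousLinearMap.integral_comp_comm
          ((ContinuousLinearMap.mul ℝ A).flip (∫ w in cset S₂ n₂ t, F H n₂ w)) hfint
        simpa [ContinuousLinearMap.mul_apply', ContinuousLinearMap.flip_apply] using h
end
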